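/- arXiv:2409.18109 — 5 statements merged into one kernel-verified Lean document; each statement's English description precedes it below -/
import Mathlib

section
/- A surjective graph homomorphism α from a graph K to a graph G that restricts to a bijection on the neighborhood of each vertex (a covering map) preserves the colorings computed by color refinement: for every i ≥ 0 and every vertex u of K, C_i(u) = C_i(α(u)), where C_0 is the uniform coloring and C_i(x) = (C_{i-1}(x), multiset of C_{i-1}(y) over neighbors y of x). -/
open SimpleGraph Filter MeasureTheory

/-- Round-`i` color-refinement colour equality across two graphs: `crStep G H i u v`
says that vertex `u` of `G` and vertex `v` of `H` receive the same colour `C_i`. -/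
def crStep {A : Type*} {B : Type*} (G : SimpleGraph A) (H : SimpleGraph B) :
    ℕ → A → B → Prop
  | 0, _, _ => True
  | i + 1, u, v =>
      crStep G H i u v ∧
        ∃ e : G.neighborSet u ≃ H.neighborSet v,
          ∀ x : G.neighborSet u, crStep G H i (x : A) ((e x : H.neighborSet v) : B)

/-- CR-equivalence of two graphs: equal multisets of stable colours, i.e. a colour-preserving
bijection between the vertex sets (colours computed by the joint run of colour refinement). -/
def CREquiv {A B : Type*} (G : SimpleGraph A) (H : SimpleGraph B) : Prop :=
  ∃ φ : A ≃ B, ∀ (v : A) (i : ℕ), crStep G H i v (φ v)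

/-- A graph is CR-identifiable if every CR-equivalent graph is isomorphic to it. -/
def CRIdentifiable {A : Type*} (G : SimpleGraph A) : Prop :=
  ∀ (B : Type) (H : SimpleGraph B), CREquiv G H → Nonempty (G ≃g H)

/-- A covering map: a surjective homomorphism restricting to a bijection on each neighbourhood. -/
def GraphCoveringMap {A B : Type*} (K : SimpleGraph A) (G : SimpleGraph B) (f : A → B) : Prop :=
  Function.Surjective f ∧ (∀ ⦃u v : A⦄, K.Adj u v → G.Adj (f u) (f v)) ∧
    ∀ u : A, Set.BijOn f (K.neighborSet u) (G.neighborSet (f u))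

/-- A set of vertices each having at least two neighbours inside the set. -/
def IsTwoCoreSet {V : Type*} (G : SimpleGraph V) (S : Set V) : Prop :=
  ∀ v ∈ S, ∃ a b, a ≠ b ∧ a ∈ S ∧ b ∈ S ∧ G.Adj v a ∧ G.Adj v b

/-- The 2-core: the maximal vertex set inducing a subgraph of minimum degree at least 2. -/
def twoCore {V : Type*} (G : SimpleGraph V) : Set V :=
  ⋃₀ {S : Set V | IsTwoCoreSet G S}

/-- Vertices reachable from `x` by a walk avoiding the 2-core except at `x`:
the vertex set of the rooted tree `T_x` hanging at a core vertex `x`. -/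
def treeSet {V : Type*} (G : SimpleGraph V) (x : V) : Set V :=
  {y | ∃ w : G.Walk x y, ∀ z ∈ w.support, z = x ∨ z ∉ twoCore G}

lemma mem_treeSet_self {V : Type*} (G : SimpleGraph V) (x : V) : x ∈ treeSet G x :=
  ⟨SimpleGraph.Walk.nil, by
    intro z hz
    simp only [SimpleGraph.Walk.support_nil, List.mem_singleton] at hz
    exact Or.inl hz⟩

/-- The trees hanging at `x` (in `G`) and at `y` (in `H`) are isomorphic as rooted trees. -/
def RootedTreeIso {V W : Type*} (G : SimpleGraph V) (x : V) (H : SimpleGraph W) (y : W) : Prop :=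
  ∃ φ : (G.induce (treeSet G x)) ≃g (H.induce (treeSet H y)),
    φ ⟨x, mem_treeSet_self G x⟩ = ⟨y, mem_treeSet_self H y⟩

/-- For a unicyclic graph, the 2-core is its unique cycle; `cLen` is the cycle length. -/
noncomputable def cLen {V : Type*} (G : SimpleGraph V) : ℕ := (twoCore G).ncard

/-- A finite connected graph with exactly one cycle. -/
def Unicyclic {V : Type*} (G : SimpleGraph V) : Prop :=
  G.Connected ∧ Nat.card G.edgeSet = Nat.card V

/-- An enumeration of the unique cycle of a unicyclic graph, as a `cLen G`-periodic
sequence running once around the cycle. -/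
def IsCycleEnum {V : Type*} (G : SimpleGraph V) (e : ℕ → V) : Prop :=
  0 < cLen G ∧ (∀ i, e (i + cLen G) = e i) ∧
    (∀ i j, i < cLen G → j < cLen G → e i = e j → i = j) ∧
    Set.range e = twoCore G ∧ ∀ i, G.Adj (e i) (e (i + 1))

/-- `q` is the length of a period of the circular word `R(G)` of rooted-tree types. -/
def HasPeriod {V : Type*} (G : SimpleGraph V) (q : ℕ) : Prop :=
  0 < q ∧ q ∣ cLen G ∧ ∃ e, IsCycleEnum G e ∧ ∀ i, RootedTreeIso G (e (i + q)) G (e i)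

/-- The minimal periodicity `p(G)` of the circular word `R(G)`. -/
noncomputable def periodicity {V : Type*} (G : SimpleGraph V) : ℕ :=
  sInf {q | HasPeriod G q}

/-- The circular words `R(G)` and `R(H)` have a common period of length `q`. -/
def CommonPeriod {V W : Type*} (G : SimpleGraph V) (H : SimpleGraph W) (q : ℕ) : Prop :=
  0 < q ∧ q ∣ cLen G ∧ q ∣ cLen H ∧
    ∃ eG eH, IsCycleEnum G eG ∧ IsCycleEnum H eH ∧
      (∀ i, RootedTreeIso G (eG (i + q)) G (eG i)) ∧
      (∀ i, RootedTreeIso H (eH (i + q)) H (eH i)) ∧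
      ∀ i, RootedTreeIso G (eG i) H (eH i)

/-- The universal covers of `G` and `H` are isomorphic, expressed as the existence of a
single tree covering both graphs. -/
def CommonUniversalCover {V W : Type*} (G : SimpleGraph V) (H : SimpleGraph W) : Prop :=
  ∃ (T : Type) (U : SimpleGraph T) (f : T → V) (g : T → W),
    U.IsTree ∧ GraphCoveringMap U G f ∧ GraphCoveringMap U H g

/-- The vertex set of the complex part of `G`: vertices whose connected component has more
edges than vertices. -/
def complexSet {V : Type*} (G : SimpleGraph V) : Set V :=
  {v | (G.connectedComponentMk v).supp.ncard <
        Nat.card (G.induce (G.connectedComponentMk v).supp).edgeSet}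

/-- A covering map `f` from `K` to `G` preserves the colourings computed by colour refinement:
for every round `i` and every vertex `u` of `K`, the colour `C_i(u)` computed in `K` equals the
colour `C_i(f u)` computed in `G`. -/
theorem covering_map_preserves_CR {A B : Type*} (K : SimpleGraph A) (G : SimpleGraph B)
    (f : A → B) (hf : GraphCoveringMap K G f) :
    ∀ (i : ℕ) (u : A), crStep K G i u (f u) := by
  obtain ⟨hsurj, hhom, hbij⟩ := hf
  intro i
  induction i with
  | zero => intro u; trivial
  | succ i ih =>
    intro u
    refine ⟨ih u, (hbij u).equiv f, fun x => ?_⟩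
    have h : (((hbij u).equiv f x : G.neighborSet (f u)) : B) = f (x : A) := rfl
    rw [h]
    exact ih (x : A)
end

section
/- A connected finite graph G is unicyclic (contains exactly one cycle) if and only if its universal cover U^G contains a unique two-way infinite path. -/
open SimpleGraph Filter MeasureTheory

namespace UIPAux
variable {W : Type*}

def chainWalk (X : SimpleGraph W) (c : ℕ → W) (hadj : ∀ k, X.Adj (c k) (c (k + 1))) :
    (a b : ℕ) → X.Walk (c a) (c (a + b))
  | a, 0 => SimpleGraph.Walk.nil.copy rfl (by rw [Nat.add_zero])
  | a, b + 1 =>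
      (SimpleGraph.Walk.cons (hadj a) (chainWalk X c hadj (a + 1) b)).copy rfl
        (congrArg c (by omega))

lemma chainWalk_length (X : SimpleGraph W) (c : ℕ → W) (hadj : ∀ k, X.Adj (c k) (c (k + 1)))
    (a b : ℕ) : (chainWalk X c hadj a b).length = b := by
  induction b generalizing a with
  | zero => simp [chainWalk]
  | succ b ih => simp [chainWalk, ih]

lemma chainWalk_support (X : SimpleGraph W) (c : ℕ → W) (hadj : ∀ k, X.Adj (c k) (c (k + 1)))
    (a b : ℕ) : (chainWalk X c hadj a b).support = (List.range' a (b + 1)).map c := by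
  induction b generalizing a with
  | zero => simp [chainWalk]
  | succ b ih =>
      rw [chainWalk, SimpleGraph.Walk.support_copy, SimpleGraph.Walk.support_cons, ih]
      conv_rhs => rw [List.range'_succ]
      simp

lemma chainWalk_edges (X : SimpleGraph W) (c : ℕ → W) (hadj : ∀ k, X.Adj (c k) (c (k + 1)))
    (a b : ℕ) : ∀ e ∈ (chainWalk X c hadj a b).edges, ∃ i < b, e = s(c (a + i), c (a + i + 1)) := by
  induction b generalizing a with
  | zero => simp [chainWalk]
  | succ b ih =>
      intro e he
      rw [chainWalk] at he
      rw [SimpleGraph.Walk.edges_copy, SimpleGraph.Walk.edges_cons] at he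
      rcases List.mem_cons.1 he with h | h
      · refine ⟨0, by omega, by simpa using h⟩
      · obtain ⟨i, hi, hie⟩ := ih (a + 1) e h
        refine ⟨i + 1, by omega, ?_⟩
        rw [hie, show a + 1 + i = a + (i + 1) by omega]

/-- Extend a finite chain (adjacency up to `M`) to a full chain by bouncing. -/
lemma chain_ext (X : SimpleGraph W) (c : ℕ → W) (M : ℕ) (hM : 1 ≤ M)
    (hadj : ∀ k < M, X.Adj (c k) (c (k + 1))) :
    ∃ c' : ℕ → W, (∀ k ≤ M, c' k = c k) ∧ ∀ k, X.Adj (c' k) (c' (k + 1)) := by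
  have hMM : X.Adj (c (M - 1)) (c M) := by
    have := hadj (M - 1) (by omega)
    rwa [show M - 1 + 1 = M by omega] at this
  refine ⟨fun k => if k ≤ M then c k else if (k - M) % 2 = 1 then c (M - 1) else c M,
    fun k hk => by simp [hk], ?_⟩
  intro k
  rcases lt_trichotomy k M with h | h | h
  · simp only [if_pos h.le, if_pos (by omega : k + 1 ≤ M)]
    exact hadj k h
  · subst h
    simp only [if_pos le_rfl, if_neg (by omega : ¬ k + 1 ≤ k),
      show (k + 1 - k) % 2 = 1 by omega, if_pos rfl]
    exact hMM.symm
  · have h1 : ¬ k ≤ M := by omega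
    have h2 : ¬ k + 1 ≤ M := by omega
    simp only [if_neg h1, if_neg h2]
    rcases Nat.mod_two_eq_zero_or_one (k - M) with e1 | e1
    · have e2 : (k + 1 - M) % 2 = 1 := by omega
      simp only [e1, e2, if_pos rfl]
      norm_num
      exact hMM.symm
    · have e2 : (k + 1 - M) % 2 = 0 := by omega
      simp only [e1, e2, if_pos rfl]
      norm_num
      exact hMM

/-- In an acyclic graph, a finite non-backtracking chain does not repeat vertices. -/
lemma acyclic_chain_seg {X : SimpleGraph W} (hX : X.IsAcyclic) :
    ∀ d : ℕ, 0 < d → ∀ (c : ℕ → W) (M : ℕ), (∀ k < M, X.Adj (c k) (c (k + 1))) →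
      (∀ k, k + 2 ≤ M → c (k + 2) ≠ c k) → ∀ i, i + d ≤ M → c (i + d) ≠ c i := by
  intro d
  induction d using Nat.strong_induction_on with
  | _ d IH =>
    intro hd c M hadj hnb i hiM heq
    match d, hd with
    | 1, _ => exact (hadj i (by omega)).ne' heq
    | 2, _ => exact hnb i (by omega) heq
    | (e + 3), _ =>
      set d := e + 3 with hdef
      have hmid : ∀ a b, 1 ≤ a → a < b → b ≤ d → c (i + a) ≠ c (i + b) := by
        intro a b ha hab hbd hab2
        have := IH (b - a) (by omega) (by omega) c M hadj hnb (i + a) (by omega)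
        rw [show i + a + (b - a) = i + b by omega] at this
        exact this hab2.symm
      obtain ⟨c', hc'eq, hc'adj⟩ := chain_ext X c M (by omega) hadj
      have hend : c' (i + 1 + (d - 1)) = c i := by
        rw [hc'eq _ (by omega), show i + 1 + (d - 1) = i + d by omega, heq]
      have hstart : c' (i + 1) = c (i + 1) := hc'eq _ (by omega)
      let w : X.Walk (c (i + 1)) (c i) :=
        (chainWalk X c' hc'adj (i + 1) (d - 1)).copy hstart hend
      have hw : w.IsPath := by
        rw [SimpleGraph.Walk.isPath_def]
        show ((chainWalk X c' hc'adj (i + 1) (d - 1)).copy hstart hend).support.Nodup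
        rw [SimpleGraph.Walk.support_copy, chainWalk_support]
        refine List.Nodup.map_on ?_ (List.nodup_range' 1)
        intro x hx y hy hxy
        rw [List.mem_range'] at hx hy
        by_contra hne
        wlog hlt : x < y generalizing x y
        · exact this y hy x hx hxy.symm (Ne.symm hne) (by omega)
        have ex : c' x = c x := hc'eq _ (by omega)
        have ey : c' y = c y := hc'eq _ (by omega)
        exact hmid (x - i) (y - i) (by omega) (by omega) (by omega)
          (by rw [show i + (x - i) = x by omega, show i + (y - i) = y by omega, ← ex, ← ey, hxy])
      let w2 : X.Walk (c (i + 1)) (c i) :=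
        SimpleGraph.Walk.cons (hadj i (by omega)).symm SimpleGraph.Walk.nil
      have hw2 : w2.IsPath := by
        simp only [w2]
        rw [SimpleGraph.Walk.isPath_def]
        simp [SimpleGraph.Walk.support_cons]
        exact fun h => (hadj i (by omega)).ne' h
      have := hX.path_unique ⟨w, hw⟩ ⟨w2, hw2⟩
      have hval : w = w2 := congrArg Subtype.val this
      have hlen : w.length = w2.length := congrArg SimpleGraph.Walk.length hval
      have l1 : w.length = d - 1 := by
        simp only [w]
        rw [SimpleGraph.Walk.length_copy, chainWalk_length]
      have l2 : w2.length = 1 := by simp [w2]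
      omega


/-- In an acyclic graph, there is no "chord" closing up an injective finite chain. -/
lemma acyclic_chain_no_chord {X : SimpleGraph W} (hX : X.IsAcyclic) (c : ℕ → W) (M : ℕ)
    (hM : 2 ≤ M) (hadj : ∀ k < M, X.Adj (c k) (c (k + 1)))
    (hinj : ∀ a b, a < b → b ≤ M → c a ≠ c b) (hchord : X.Adj (c 0) (c M)) : False := by
  obtain ⟨c', hc'eq, hc'adj⟩ := chain_ext X c M (by omega) hadj
  let w : X.Walk (c 0) (c M) :=
    (chainWalk X c' hc'adj 0 M).copy (hc'eq 0 (by omega)) (by rw [Nat.zero_add, hc'eq M le_rfl])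
  have hw : w.IsPath := by
    rw [SimpleGraph.Walk.isPath_def]
    show ((chainWalk X c' hc'adj 0 M).copy _ _).support.Nodup
    rw [SimpleGraph.Walk.support_copy, chainWalk_support]
    refine List.Nodup.map_on ?_ (List.nodup_range' 1)
    intro x hx y hy hxy
    rw [List.mem_range'] at hx hy
    by_contra hne
    wlog hlt : x < y generalizing x y
    · exact this y hy x hx hxy.symm (Ne.symm hne) (by omega)
    rw [hc'eq x (by omega), hc'eq y (by omega)] at hxy
    exact hinj x y hlt (by omega) hxy
  let w2 : X.Walk (c 0) (c M) := SimpleGraph.Walk.cons hchord SimpleGraph.Walk.nil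
  have hw2 : w2.IsPath := by
    rw [SimpleGraph.Walk.isPath_def]
    simp [w2, SimpleGraph.Walk.support_cons]
    exact fun h => hchord.ne h
  have := hX.path_unique ⟨w, hw⟩ ⟨w2, hw2⟩
  have hlen : w.length = w2.length := congrArg SimpleGraph.Walk.length (congrArg Subtype.val this)
  have l1 : w.length = M := by
    simp only [w]
    rw [SimpleGraph.Walk.length_copy, chainWalk_length]
  have l2 : w2.length = 1 := by simp [w2]
  omega

/-- In an acyclic graph, ℤ-indexed non-backtracking chains are injective. -/
lemma acyclic_zchain_inj {X : SimpleGraph W} (hX : X.IsAcyclic) (c : ℤ → W)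
    (hadj : ∀ k, X.Adj (c k) (c (k + 1))) (hnb : ∀ k, c (k + 2) ≠ c k) :
    Function.Injective c := by
  have main : ∀ i j : ℤ, i < j → c i ≠ c j := by
    intro i j hij heq
    set cc : ℕ → W := fun n => c (i + n) with hcc
    have hccadj : ∀ k : ℕ, X.Adj (cc k) (cc (k + 1)) := by
      intro k
      have := hadj (i + k)
      rwa [show i + (k : ℤ) + 1 = i + ((k : ℕ) + 1 : ℕ) by push_cast; ring] at this
    have hccnb : ∀ k : ℕ, cc (k + 2) ≠ cc k := by
      intro k
      have := hnb (i + k)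
      rwa [show i + (k : ℤ) + 2 = i + ((k : ℕ) + 2 : ℕ) by push_cast; ring] at this
    set d : ℕ := (j - i).toNat with hd
    have hd0 : 0 < d := by omega
    have := acyclic_chain_seg hX d hd0 cc (d) (fun k hk => hccadj k) (fun k hk => hccnb k) 0
      (by omega)
    apply this
    simp only [cc, Nat.zero_add]
    rw [show i + ((0 : ℕ) : ℤ) = i by push_cast; ring, show i + ((d : ℕ) : ℤ) = j by omega]
    exact heq.symm
  intro i j h
  by_contra hne
  rcases lt_trichotomy i j with hlt | hEq | hgt
  · exact main i j hlt h
  · exact hne hEq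
  · exact main j i hgt h.symm

/-- In an acyclic graph, an injective ℤ-chain has no chords. -/
lemma acyclic_zchain_no_chord {X : SimpleGraph W} (hX : X.IsAcyclic) (c : ℤ → W)
    (hadj : ∀ k, X.Adj (c k) (c (k + 1))) (hinj : Function.Injective c) {i j : ℤ}
    (h : X.Adj (c i) (c j)) : j = i + 1 ∨ j = i - 1 := by
  have main : ∀ i j : ℤ, i < j → X.Adj (c i) (c j) → j = i + 1 := by
    intro i j hij hadj2
    by_contra hne
    have hj2 : i + 2 ≤ j := by omega
    set cc : ℕ → W := fun n => c (i + n) with hcc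
    set M : ℕ := (j - i).toNat with hM
    refine acyclic_chain_no_chord hX cc M (by omega) ?_ ?_ ?_
    · intro k _
      have := hadj (i + k)
      rwa [show i + (k : ℤ) + 1 = i + ((k : ℕ) + 1 : ℕ) by push_cast; ring] at this
    · intro a b hab hbM heq
      have h2 := hinj heq
      omega
    · show X.Adj (c (i + ((0:ℕ) : ℤ))) (c (i + ((M:ℕ) : ℤ)))
      rw [show i + ((0 : ℕ) : ℤ) = i by push_cast; ring, show i + ((M : ℕ) : ℤ) = j by omega]
      exact hadj2
  rcases lt_trichotomy i j with hlt | hEq | hgt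
  · exact Or.inl (main i j hlt h)
  · exact absurd hEq (fun hh => h.ne (congrArg c hh))
  · exact Or.inr (by have := main j i hgt h.symm; omega)


lemma support_getElem? {X : SimpleGraph W} {u v : W} (p : X.Walk u v) :
    ∀ n ≤ p.length, p.support[n]? = some (p.getVert n) := by
  induction p with
  | nil =>
      intro n hn
      have : n = 0 := by simpa using hn
      subst this
      simp [SimpleGraph.Walk.getVert]
  | cons h q ih =>
      intro n hn
      cases n with
      | zero => simp [SimpleGraph.Walk.getVert]
      | succ n =>
          rw [SimpleGraph.Walk.support_cons, List.getElem?_cons_succ,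
            SimpleGraph.Walk.getVert_cons_succ]
          exact ih n (by simpa [SimpleGraph.Walk.length_cons] using hn)

lemma path_getVert_inj {X : SimpleGraph W} {u v : W} {p : X.Walk u v} (hp : p.IsPath) :
    ∀ i j, i ≤ p.length → j ≤ p.length → p.getVert i = p.getVert j → i = j := by
  intro i j hi hj heq
  refine (List.getElem?_inj (l := p.support) ?_ hp.support_nodup).mp ?_
  · rw [SimpleGraph.Walk.length_support]; omega
  · rw [support_getElem? p i hi, support_getElem? p j hj, heq]

lemma cycle_getVert_inj {X : SimpleGraph W} {u : W} {p : X.Walk u u} (hp : p.IsCycle) :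
    ∀ i j, 1 ≤ i → i ≤ p.length → 1 ≤ j → j ≤ p.length → p.getVert i = p.getVert j → i = j := by
  intro i j hi1 hi2 hj1 hj2 heq
  have hlen : p.support.tail.length = p.length := by
    have := SimpleGraph.Walk.length_support p
    rw [SimpleGraph.Walk.support_eq_cons] at this
    simpa using by omega
  have htl : ∀ n, 1 ≤ n → n ≤ p.length → p.support.tail[n-1]? = some (p.getVert n) := by
    intro n h1 h2
    have h3 := support_getElem? p n h2
    rw [SimpleGraph.Walk.support_eq_cons] at h3
    have h4 : (u :: p.support.tail)[n]? = p.support.tail[n-1]? := by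
      conv_lhs => rw [show n = (n - 1) + 1 by omega]
      rw [List.getElem?_cons_succ]
    rw [h4] at h3
    exact h3
  have := (List.getElem?_inj (l := p.support.tail) (i := i - 1) (j := j - 1)
    (by omega) hp.support_nodup).mp ?_
  · omega
  · rw [htl i hi1 hi2, htl j hj1 hj2, heq]

lemma cycle_getVert_inj' {X : SimpleGraph W} {u : W} {p : X.Walk u u} (hp : p.IsCycle) :
    ∀ i j, i < p.length → j < p.length → p.getVert i = p.getVert j → i = j := by
  have h30 : 3 ≤ p.length := hp.three_le_length
  intro i j hi hj heq
  rcases Nat.eq_zero_or_pos i with hi0 | hi1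
  · rcases Nat.eq_zero_or_pos j with hj0 | hj1
    · omega
    · subst hi0
      have heq' : p.getVert p.length = p.getVert j := by
        rw [SimpleGraph.Walk.getVert_length]
        rw [SimpleGraph.Walk.getVert_zero] at heq
        exact heq
      have := cycle_getVert_inj hp p.length j (by omega) le_rfl hj1 (by omega) heq'
      omega
  · rcases Nat.eq_zero_or_pos j with hj0 | hj1
    · subst hj0
      have heq' : p.getVert i = p.getVert p.length := by
        rw [SimpleGraph.Walk.getVert_length]
        rw [SimpleGraph.Walk.getVert_zero] at heq
        exact heq
      have := cycle_getVert_inj hp i p.length (by omega) (by omega) (by omega) le_rfl heq'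
      omega
    · exact cycle_getVert_inj hp i j hi1 (by omega) hj1 (by omega) heq

lemma getVert_pair_mem_edges {X : SimpleGraph W} {u v : W} (p : X.Walk u v) :
    ∀ i < p.length, s(p.getVert i, p.getVert (i + 1)) ∈ p.edges := by
  induction p with
  | nil => simp
  | cons h q ih =>
      intro i hi
      cases i with
      | zero =>
          simp only [SimpleGraph.Walk.getVert_zero, SimpleGraph.Walk.edges_cons]
          rw [SimpleGraph.Walk.getVert_cons_succ, SimpleGraph.Walk.getVert_zero]
          exact List.mem_cons_self
      | succ i =>
          rw [SimpleGraph.Walk.getVert_cons_succ, SimpleGraph.Walk.getVert_cons_succ,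
            SimpleGraph.Walk.edges_cons]
          exact List.mem_cons_of_mem _ (ih i (by simpa [SimpleGraph.Walk.length_cons] using hi))

lemma mem_edges_getVert {X : SimpleGraph W} {u v : W} (p : X.Walk u v) :
    ∀ e ∈ p.edges, ∃ i < p.length, e = s(p.getVert i, p.getVert (i + 1)) := by
  induction p with
  | nil => simp
  | cons h q ih =>
      intro e he
      rw [SimpleGraph.Walk.edges_cons] at he
      rcases List.mem_cons.1 he with h1 | h1
      · refine ⟨0, by simp [SimpleGraph.Walk.length_cons], ?_⟩
        rw [SimpleGraph.Walk.getVert_zero, SimpleGraph.Walk.getVert_cons_succ,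
          SimpleGraph.Walk.getVert_zero]
        exact h1
      · obtain ⟨i, hi, hie⟩ := ih e h1
        refine ⟨i + 1, by simp [SimpleGraph.Walk.length_cons]; omega, ?_⟩
        rw [SimpleGraph.Walk.getVert_cons_succ, SimpleGraph.Walk.getVert_cons_succ]
        exact hie


section Cov
variable {A B : Type*} {K : SimpleGraph A} {G : SimpleGraph B} {f : A → B}

lemma cov_loc_inj (hf : GraphCoveringMap K G f) {u a b : A} (ha : K.Adj u a) (hb : K.Adj u b)
    (h : f a = f b) : a = b :=
  (hf.2.2 u).2.1 ha hb h

lemma cov_loc_surj (hf : GraphCoveringMap K G f) {u : A} {x : B} (hx : G.Adj (f u) x) :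
    ∃ a, K.Adj u a ∧ f a = x := by
  obtain ⟨a, ha, hfa⟩ := (hf.2.2 u).2.2 (show x ∈ G.neighborSet (f u) from hx)
  exact ⟨a, ha, hfa⟩

lemma cov_lift_ray (hf : GraphCoveringMap K G f) (d : ℕ → B)
    (hd : ∀ n, G.Adj (d n) (d (n + 1))) (u0 : A) (h0 : f u0 = d 0) :
    ∃ e : ℕ → A, e 0 = u0 ∧ (∀ n, K.Adj (e n) (e (n + 1))) ∧ ∀ n, f (e n) = d n := by
  classical
  let step : ∀ n, {p : A // f p = d n} → {p : A // f p = d (n + 1)} := fun n p =>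
    ⟨Classical.choose (cov_loc_surj hf (show G.Adj (f p.1) (d (n + 1)) by rw [p.2]; exact hd n)),
     (Classical.choose_spec (cov_loc_surj hf
       (show G.Adj (f p.1) (d (n + 1)) by rw [p.2]; exact hd n))).2⟩
  let F : (n : ℕ) → {p : A // f p = d n} := fun n => Nat.rec ⟨u0, h0⟩ step n
  refine ⟨fun n => (F n).1, rfl, ?_, fun n => (F n).2⟩
  intro n
  show K.Adj (F n).1 (step n (F n)).1
  exact (Classical.choose_spec (cov_loc_surj hf
    (show G.Adj (f (F n).1) (d (n + 1)) by rw [(F n).2]; exact hd n))).1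

lemma cov_lift_zchain (hf : GraphCoveringMap K G f) (h : ℤ → B)
    (hadj : ∀ k, G.Adj (h k) (h (k + 1))) (u0 : A) (h0 : f u0 = h 0) :
    ∃ g : ℤ → A, g 0 = u0 ∧ (∀ k, K.Adj (g k) (g (k + 1))) ∧ ∀ k, f (g k) = h k := by
  obtain ⟨ep, hep0, hepadj, hepf⟩ := cov_lift_ray hf (fun n => h n)
    (fun n => by
      have := hadj n
      rwa [show ((n : ℤ) + 1) = ((n + 1 : ℕ) : ℤ) by push_cast; ring] at this) u0 h0
  obtain ⟨en, hen0, henadj, henf⟩ := cov_lift_ray hf (fun n => h (-n))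
    (fun n => by
      have := (hadj (-(n + 1 : ℕ))).symm
      rwa [show (-(n + 1 : ℕ) : ℤ) + 1 = -(n : ℕ) by push_cast; ring] at this) u0 h0
  refine ⟨fun k => if 0 ≤ k then ep k.toNat else en (-k).toNat, by simp [hep0], ?_, ?_⟩
  · intro k
    rcases le_or_gt 0 k with hk | hk
    · simp only [if_pos hk, if_pos (by omega : (0:ℤ) ≤ k + 1)]
      rw [show (k + 1).toNat = k.toNat + 1 by omega]
      exact hepadj k.toNat
    · rcases eq_or_lt_of_le (show k ≤ -1 by omega) with hk1 | hk1
      · subst hk1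
        simp only [if_neg (by omega : ¬ (0:ℤ) ≤ (-1 : ℤ)), if_pos (by omega : (0:ℤ) ≤ (-1:ℤ) + 1)]
        rw [show ((-1 : ℤ) + 1).toNat = 0 by omega, show (-(-1 : ℤ)).toNat = 1 by omega, hep0,
          ← hen0]
        exact (henadj 0).symm
      · have hk2 : k ≤ -2 := by omega
        simp only [if_neg (by omega : ¬ (0:ℤ) ≤ k), if_neg (by omega : ¬ (0:ℤ) ≤ k + 1)]
        have hm : (-k).toNat = (-(k+1)).toNat + 1 := by omega
        rw [hm]
        exact (henadj (-(k+1)).toNat).symm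
  · intro k
    rcases le_or_gt 0 k with hk | hk
    · simp only [if_pos hk]
      rw [hepf k.toNat, show ((k.toNat : ℕ) : ℤ) = k by omega]
    · simp only [if_neg (by omega : ¬ (0:ℤ) ≤ k)]
      rw [henf (-k).toNat, show (-((-k).toNat : ℕ) : ℤ) = k by omega]

end Cov


section Per
variable {B : Type*} {G : SimpleGraph B} {v0 : B}

/-- The periodic ℤ-indexed chain running around a closed walk. -/
noncomputable def per (c : G.Walk v0 v0) : ℤ → B :=
  fun k => c.getVert (k % (c.length : ℤ)).toNat

variable {c : G.Walk v0 v0}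

lemma per_mod_lt (hc : c.IsCycle) (k : ℤ) :
    0 ≤ k % (c.length : ℤ) ∧ k % (c.length : ℤ) < (c.length : ℤ) := by
  have h3 := hc.three_le_length
  constructor
  · exact Int.emod_nonneg k (by exact_mod_cast by omega)
  · exact Int.emod_lt_of_pos k (by exact_mod_cast by omega)

lemma per_congr (h : j % (c.length : ℤ) = j' % (c.length : ℤ)) : per c j = per c j' := by
  unfold per; rw [h]

lemma per_periodic (k : ℤ) : per c (k + c.length) = per c k :=
  per_congr (by simp [Int.add_mul_emod_self_left, Int.add_emod])

lemma per_ofNat (hc : c.IsCycle) {i : ℕ} (hi : i < c.length) : per c (i : ℤ) = c.getVert i := by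
  unfold per
  rw [Int.emod_eq_of_lt (by positivity) (by exact_mod_cast hi)]
  simp

lemma per_idx (hc : c.IsCycle) (k : ℤ) :
    ∃ i : ℕ, i < c.length ∧ per c k = c.getVert i ∧ per c (k + 1) = c.getVert (i + 1) := by
  obtain ⟨h0, h1⟩ := per_mod_lt hc k
  refine ⟨(k % (c.length : ℤ)).toNat, by omega, rfl, ?_⟩
  have h3 := hc.three_le_length
  have h1L : (1 : ℤ) % (c.length : ℤ) = 1 :=
    Int.emod_eq_of_lt (by norm_num) (by exact_mod_cast by omega)
  have hkey : (k + 1) % (c.length : ℤ) = ((k % (c.length : ℤ)) + 1) % (c.length : ℤ) := by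
    conv_lhs => rw [Int.add_emod]
    rw [h1L]
  rcases eq_or_lt_of_le (show (k % (c.length : ℤ)) + 1 ≤ (c.length : ℤ) by omega) with he | hl
  · have : (k + 1) % (c.length : ℤ) = 0 := by
      rw [hkey, he, Int.emod_self]
    unfold per
    rw [this]
    have : ((k % (c.length : ℤ)).toNat + 1) = c.length := by omega
    rw [this, SimpleGraph.Walk.getVert_length]
    simp
  · have : (k + 1) % (c.length : ℤ) = (k % (c.length : ℤ)) + 1 := by
      rw [hkey]
      exact Int.emod_eq_of_lt (by omega) hl
    unfold per
    rw [this]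
    congr 1
    omega

lemma per_adj (hc : c.IsCycle) (k : ℤ) : G.Adj (per c k) (per c (k + 1)) := by
  obtain ⟨i, hi, h1, h2⟩ := per_idx hc k
  rw [h1, h2]
  exact c.adj_getVert_succ hi

lemma per_pair_mem (hc : c.IsCycle) (k : ℤ) : s(per c k, per c (k + 1)) ∈ c.edges := by
  obtain ⟨i, hi, h1, h2⟩ := per_idx hc k
  rw [h1, h2]
  exact getVert_pair_mem_edges c i hi

lemma per_inj_res (hc : c.IsCycle) {j j' : ℤ} (h : per c j = per c j') :
    j % (c.length : ℤ) = j' % (c.length : ℤ) := by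
  obtain ⟨h0, h1⟩ := per_mod_lt hc j
  obtain ⟨h0', h1'⟩ := per_mod_lt hc j'
  have := cycle_getVert_inj' hc (j % (c.length : ℤ)).toNat (j' % (c.length : ℤ)).toNat
    (by omega) (by omega) h
  omega

lemma per_nb (hc : c.IsCycle) (k : ℤ) : per c (k + 2) ≠ per c k := by
  intro h
  have h3 := hc.three_le_length
  have hres := per_inj_res hc h
  have hdvd : (c.length : ℤ) ∣ 2 := by
    have h5 : (c.length : ℤ) ∣ (k + 2) - k := Int.ModEq.dvd (Int.ModEq.symm hres)
    rwa [show (k + 2) - k = 2 by ring] at h5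
  have := Int.le_of_dvd (by norm_num) hdvd
  omega

lemma mem_edges_per (hc : c.IsCycle) {e : Sym2 B} (he : e ∈ c.edges) :
    ∃ k : ℤ, e = s(per c k, per c (k + 1)) := by
  obtain ⟨i, hi, hie⟩ := mem_edges_getVert c e he
  refine ⟨(i : ℤ), ?_⟩
  obtain ⟨i', hi', h1, h2⟩ := per_idx hc (i : ℤ)
  have : i' = i := by
    have := per_ofNat hc hi
    rw [this] at h1
    exact (cycle_getVert_inj' hc i' i hi' hi h1.symm)
  subst this
  rw [h1, h2]
  exact hie

lemma edge_endpoint_mem (hc : c.IsCycle) {x y : B} (he : s(x, y) ∈ c.edges) :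
    x ∈ Set.range (per c) ∧ y ∈ Set.range (per c) := by
  obtain ⟨k, hk⟩ := mem_edges_per hc he
  rw [Sym2.eq_iff] at hk
  rcases hk with ⟨rfl, rfl⟩ | ⟨rfl, rfl⟩
  · exact ⟨⟨k, rfl⟩, ⟨k + 1, rfl⟩⟩
  · exact ⟨⟨k + 1, rfl⟩, ⟨k, rfl⟩⟩

lemma res_shift {L : ℤ} {j k : ℤ} (h : j % L = k % L) (a : ℤ) : (j + a) % L = (k + a) % L := by
  rw [Int.add_emod, h, ← Int.add_emod]

lemma per_nbr (hc : c.IsCycle) {j : ℤ} {x : B} (he : s(per c j, x) ∈ c.edges) :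
    x = per c (j + 1) ∨ x = per c (j - 1) := by
  obtain ⟨k, hk⟩ := mem_edges_per hc he
  rw [Sym2.eq_iff] at hk
  rcases hk with ⟨h1, rfl⟩ | ⟨h1, rfl⟩
  · left
    exact per_congr (res_shift (per_inj_res hc h1) 1).symm
  · right
    refine (per_congr ?_).symm
    have := per_inj_res hc h1.symm
    have := res_shift this (-1)
    rw [show k + 1 + -1 = k by ring, show j + -1 = j - 1 by ring] at this
    exact this.symm

lemma per_succ_ne_pred (hc : c.IsCycle) (j : ℤ) : per c (j + 1) ≠ per c (j - 1) := by
  have := per_nb hc (j - 1)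
  rwa [show j - 1 + 2 = j + 1 by ring] at this

end Per


section Count
variable {V : Type*} [Fintype V]

lemma delete_reachable {G : SimpleGraph V} {x y : V}
    (hxy : (G \ SimpleGraph.fromEdgeSet {s(x, y)}).Reachable x y) :
    ∀ {u v : V}, G.Walk u v → (G \ SimpleGraph.fromEdgeSet {s(x, y)}).Reachable u v := by
  intro u v p
  induction p with
  | nil => exact SimpleGraph.Reachable.refl _
  | @cons u w v h p ih =>
      refine SimpleGraph.Reachable.trans ?_ ih
      by_cases he : s(u, w) = s(x, y)
      · rw [Sym2.eq_iff] at he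
        rcases he with ⟨rfl, rfl⟩ | ⟨rfl, rfl⟩
        · exact hxy
        · exact hxy.symm
      · refine SimpleGraph.Adj.reachable ?_
        rw [SimpleGraph.sdiff_adj]
        refine ⟨h, ?_⟩
        rw [SimpleGraph.fromEdgeSet_adj]
        rintro ⟨hmem, -⟩
        exact he (by simpa using hmem)

lemma delete_connected {G : SimpleGraph V} {x y : V} (hG : G.Connected)
    (hxy : (G \ SimpleGraph.fromEdgeSet {s(x, y)}).Reachable x y) :
    (G \ SimpleGraph.fromEdgeSet {s(x, y)}).Connected := by
  rw [SimpleGraph.connected_iff]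
  refine ⟨?_, hG.nonempty⟩
  intro u v
  obtain ⟨p⟩ := hG.preconnected u v
  exact delete_reachable hxy p

lemma delete_edgeSet {G : SimpleGraph V} {x y : V} :
    (G \ SimpleGraph.fromEdgeSet {s(x, y)}).edgeSet = G.edgeSet \ {s(x, y)} := by
  rw [SimpleGraph.edgeSet_sdiff, SimpleGraph.edgeSet_fromEdgeSet,
    SimpleGraph.edgeSet_sdiff_sdiff_isDiag]

lemma exists_spanning_tree :
    ∀ (m : ℕ) (G : SimpleGraph V), G.edgeSet.ncard = m → G.Connected →
      ∃ t : SimpleGraph V, t ≤ G ∧ t.IsTree := by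
  intro m
  induction m using Nat.strong_induction_on with
  | _ m IH =>
    intro G hm hG
    by_cases hac : G.IsAcyclic
    · exact ⟨G, le_rfl, hG, hac⟩
    · rw [SimpleGraph.IsAcyclic] at hac
      push_neg at hac
      obtain ⟨v0, c, hc⟩ := hac
      have hne : c.edges ≠ [] := by
        have h3 := hc.three_le_length
        have := SimpleGraph.Walk.length_edges c
        intro h
        rw [h] at this
        simp at this
        omega
      obtain ⟨e, he⟩ := List.exists_mem_of_ne_nil _ hne
      have heG : e ∈ G.edgeSet := SimpleGraph.Walk.edges_subset_edgeSet c he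
      revert he heG
      induction e using Sym2.ind with
      | _ x y =>
        intro he heG
        have hadj : G.Adj x y := heG
        have hnb : ¬G.IsBridge s(x, y) := fun hb =>
          ((SimpleGraph.isBridge_iff_forall_cycle_notMem heG).mp hb) c hc he
        have hreach : (G \ SimpleGraph.fromEdgeSet {s(x, y)}).Reachable x y := by
          by_contra hno
          exact hnb (SimpleGraph.isBridge_iff.mpr hno)
        set G' := G \ SimpleGraph.fromEdgeSet {s(x, y)} with hG'
        have hG'conn : G'.Connected := delete_connected hG hreach
        have hG'card : G'.edgeSet.ncard = m - 1 := by
          rw [hG', delete_edgeSet, Set.ncard_diff_singleton_of_mem heG, hm]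
        have hm1 : 1 ≤ m := by
          rw [← hm]
          exact (Set.ncard_pos (Set.toFinite _)).mpr ⟨_, heG⟩
        obtain ⟨t, ht, htree⟩ := IH (m - 1) (by omega) G' hG'card hG'conn
        exact ⟨t, le_trans ht sdiff_le, htree⟩

lemma card_le_of_connected {G : SimpleGraph V} (hG : G.Connected) :
    Fintype.card V ≤ G.edgeSet.ncard + 1 := by
  obtain ⟨t, ht, htree⟩ := exists_spanning_tree _ G rfl hG
  haveI : Fintype ↥t.edgeSet := Fintype.ofFinite _
  have hcard := htree.card_edgeFinset
  have h1 : t.edgeFinset.card = t.edgeSet.ncard := by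
    rw [Set.ncard_eq_toFinset_card']; convert rfl; ext; simp
  have h2 : t.edgeSet.ncard ≤ G.edgeSet.ncard :=
    Set.ncard_le_ncard (SimpleGraph.edgeSet_mono ht) (Set.toFinite _)
  omega

lemma acyclic_of_card {G : SimpleGraph V} (hG : G.Connected)
    (hcard : G.edgeSet.ncard + 1 = Fintype.card V) : G.IsAcyclic := by
  by_contra hac
  rw [SimpleGraph.IsAcyclic] at hac
  push_neg at hac
  obtain ⟨v0, c, hc⟩ := hac
  have hne : c.edges ≠ [] := by
    have h3 := hc.three_le_length
    have := SimpleGraph.Walk.length_edges c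
    intro h
    rw [h] at this
    simp at this
    omega
  obtain ⟨e, he⟩ := List.exists_mem_of_ne_nil _ hne
  have heG : e ∈ G.edgeSet := SimpleGraph.Walk.edges_subset_edgeSet c he
  revert he heG
  induction e using Sym2.ind with
  | _ x y =>
    intro he heG
    have hadj : G.Adj x y := heG
    have hnb : ¬G.IsBridge s(x, y) := fun hb =>
      ((SimpleGraph.isBridge_iff_forall_cycle_notMem heG).mp hb) c hc he
    have hreach : (G \ SimpleGraph.fromEdgeSet {s(x, y)}).Reachable x y := by
      by_contra hno
      exact hnb (SimpleGraph.isBridge_iff.mpr hno)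
    have hG'conn := delete_connected hG hreach
    have h1 : (G \ SimpleGraph.fromEdgeSet {s(x, y)}).edgeSet.ncard = G.edgeSet.ncard - 1 := by
      rw [delete_edgeSet, Set.ncard_diff_singleton_of_mem heG]
    have hm1 : 1 ≤ G.edgeSet.ncard := (Set.ncard_pos (Set.toFinite _)).mpr ⟨_, heG⟩
    have := card_le_of_connected hG'conn
    omega

/-- In a connected graph with as many edges as vertices, every edge not on the
given cycle is a bridge. -/
lemma bridge_of_not_mem_cycle {G : SimpleGraph V} (hG : G.Connected)
    (hcard : G.edgeSet.ncard = Fintype.card V) {v0 : V} {c : G.Walk v0 v0} (hc : c.IsCycle)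
    {e : Sym2 V} (heG : e ∈ G.edgeSet) (hec : e ∉ c.edges) : G.IsBridge e := by
  by_contra hnb
  revert heG hec hnb
  induction e using Sym2.ind with
  | _ x y =>
    intro heG hec hnb
    have hadj : G.Adj x y := heG
    have hreach : (G \ SimpleGraph.fromEdgeSet {s(x, y)}).Reachable x y := by
      by_contra hno
      exact hnb (SimpleGraph.isBridge_iff.mpr hno)
    have hG'conn := delete_connected hG hreach
    have h1 : (G \ SimpleGraph.fromEdgeSet {s(x, y)}).edgeSet.ncard = G.edgeSet.ncard - 1 := by
      rw [delete_edgeSet, Set.ncard_diff_singleton_of_mem heG]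
    have hm1 : 1 ≤ G.edgeSet.ncard := (Set.ncard_pos (Set.toFinite _)).mpr ⟨_, heG⟩
    have hac : (G \ SimpleGraph.fromEdgeSet {s(x, y)}).IsAcyclic := by
      refine acyclic_of_card hG'conn ?_
      rw [h1]
      have hn1 : 1 ≤ Fintype.card V := by omega
      omega
    have hsub : ∀ e' ∈ c.edges, e' ∈ (G \ SimpleGraph.fromEdgeSet {s(x, y)}).edgeSet := by
      intro e' he'
      rw [delete_edgeSet]
      exact ⟨SimpleGraph.Walk.edges_subset_edgeSet c he', fun hmem => hec (by
        rw [Set.mem_singleton_iff] at hmem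
        rw [← hmem]
        exact he')⟩
    exact hac _ (hc.transfer hsub)

end Count


section Unicyclic
variable {V : Type*} [Fintype V] {G : SimpleGraph V} {v0 : V} {c : G.Walk v0 v0}

lemma G2_acyclic (hG : G.Connected) (hcard : G.edgeSet.ncard = Fintype.card V)
    (hc : c.IsCycle) : (G.deleteEdges {e | e ∈ c.edges}).IsAcyclic := by
  by_contra hac
  rw [SimpleGraph.IsAcyclic] at hac
  push_neg at hac
  obtain ⟨w0, c2, hc2⟩ := hac
  have hne : c2.edges ≠ [] := by
    have h3 := hc2.three_le_length
    have := SimpleGraph.Walk.length_edges c2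
    intro h
    rw [h] at this
    simp at this
    omega
  obtain ⟨e2, he2⟩ := List.exists_mem_of_ne_nil _ hne
  have he2' : e2 ∈ (G.deleteEdges {e | e ∈ c.edges}).edgeSet :=
    SimpleGraph.Walk.edges_subset_edgeSet c2 he2
  rw [SimpleGraph.edgeSet_deleteEdges] at he2'
  have hbr := bridge_of_not_mem_cycle hG hcard hc he2'.1 he2'.2
  have hsub : ∀ e' ∈ c2.edges, e' ∈ G.edgeSet := by
    intro e' he'
    have := SimpleGraph.Walk.edges_subset_edgeSet c2 he'
    rw [SimpleGraph.edgeSet_deleteEdges] at this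
    exact this.1
  have := ((SimpleGraph.isBridge_iff_forall_cycle_notMem he2'.1).mp hbr)
    (c2.transfer G hsub) (hc2.transfer hsub)
  rw [SimpleGraph.Walk.edges_transfer] at this
  exact this he2

lemma core_sep (hG : G.Connected) (hcard : G.edgeSet.ncard = Fintype.card V)
    (hc : c.IsCycle) {j j' : ℤ}
    (hr : (G.deleteEdges {e | e ∈ c.edges}).Reachable (per c j) (per c j')) :
    per c j = per c j' := by
  classical
  by_contra hne
  set G2 := G.deleteEdges {e | e ∈ c.edges} with hG2
  obtain ⟨p0⟩ := hr
  set q : G2.Walk (per c j) (per c j') := p0.toPath.val with hq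
  have hqpath : q.IsPath := p0.toPath.2
  have hqnil : ¬ q.Nil := SimpleGraph.Walk.not_nil_of_ne hne
  set x1 := q.getVert 1 with hx1
  have hadj1 : G2.Adj (per c j) x1 := q.adj_snd hqnil
  have hadj1G : G.Adj (per c j) x1 := (SimpleGraph.deleteEdges_adj.mp hadj1).1
  have hnotc : s(per c j, x1) ∉ c.edges := by
    have := (SimpleGraph.deleteEdges_adj.mp hadj1).2
    simpa using this
  have hbr : G.IsBridge s(per c j, x1) :=
    bridge_of_not_mem_cycle hG hcard hc hadj1G hnotc
  -- the walk x1 → per c j' given by the tail of q, avoiding the bridge edge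
  have hconseq := SimpleGraph.Walk.cons_tail_eq q hqnil
  have hedges : q.edges = s(per c j, x1) :: q.tail.edges := by
    conv_lhs => rw [← hconseq]
    rw [SimpleGraph.Walk.edges_cons]
  have htailnotmem : s(per c j, x1) ∉ q.tail.edges := by
    have hnodup := hqpath.edges_nodup
    rw [hedges] at hnodup
    exact (List.nodup_cons.mp hnodup).1
  set e' : Sym2 V := s(per c j, x1) with he'
  have htailsub : ∀ e'' ∈ q.tail.edges, e'' ∈ (G \ SimpleGraph.fromEdgeSet {e'}).edgeSet := by
    intro e'' he''
    rw [delete_edgeSet]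
    constructor
    · have : e'' ∈ q.edges := by rw [hedges]; exact List.mem_cons_of_mem _ he''
      have := SimpleGraph.Walk.edges_subset_edgeSet q this
      rw [hG2, SimpleGraph.edgeSet_deleteEdges] at this
      exact this.1
    · intro hmem
      rw [Set.mem_singleton_iff] at hmem
      exact htailnotmem (show e' ∈ q.tail.edges from by rw [he', ← hmem]; exact he'')
  have wtail : (G \ SimpleGraph.fromEdgeSet {e'}).Walk x1 (per c j') :=
    q.tail.transfer _ htailsub
  -- the arc along the cycle from per c j' back to per c j, avoiding the bridge edge
  have hLpos : (0:ℤ) < (c.length : ℤ) := by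
    have := hc.three_le_length; exact_mod_cast by omega
  set t : ℤ := (j - j') % (c.length : ℤ) with ht
  have ht0 : 0 ≤ t := Int.emod_nonneg _ (by omega)
  have harc0 : per c (j' + (t.toNat : ℤ)) = per c j := by
    refine per_congr ?_
    rw [show ((t.toNat : ℤ)) = t by omega, ht]
    conv_lhs => rw [Int.add_emod, Int.emod_emod_of_dvd _ dvd_rfl, ← Int.add_emod]
    rw [show j' + (j - j') = j by ring]
  have harcadj : ∀ n : ℕ, G.Adj (per c (j' + n)) (per c (j' + (n + 1 : ℕ))) := by
    intro n
    have := per_adj hc (j' + n)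
    rwa [show (j' + (n:ℤ) + 1) = j' + ((n + 1 : ℕ) : ℤ) by push_cast; ring] at this
  set arc0 : G.Walk (per c (j' + ((0:ℕ):ℤ))) (per c (j' + (((0:ℕ) + t.toNat : ℕ) : ℤ))) :=
    chainWalk G (fun n : ℕ => per c (j' + n)) harcadj 0 t.toNat with harc
  have harcsub : ∀ e'' ∈ arc0.edges, e'' ∈ (G \ SimpleGraph.fromEdgeSet {e'}).edgeSet := by
    intro e'' he''
    obtain ⟨i, hi, hie⟩ := chainWalk_edges G _ harcadj 0 t.toNat e'' he''
    have hmemc : e'' ∈ c.edges := by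
      rw [hie]
      have := per_pair_mem hc (j' + (i:ℕ))
      rwa [show (j' + (i:ℤ) + 1) = j' + (((0:ℕ) + i + 1 : ℕ) : ℤ) by push_cast; ring,
        show (j' + (i:ℤ)) = j' + (((0:ℕ) + i : ℕ) : ℤ) by push_cast; ring] at this
    rw [delete_edgeSet]
    refine ⟨SimpleGraph.Walk.edges_subset_edgeSet c hmemc, ?_⟩
    intro hmem
    rw [Set.mem_singleton_iff] at hmem
    exact hnotc (show e' ∈ c.edges from by rw [he', ← hmem]; exact hmemc)
  have warc : (G \ SimpleGraph.fromEdgeSet {e'}).Walk (per c j') (per c j) :=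
    ((arc0.transfer _ harcsub).copy (by norm_num) (by rw [show ((0:ℕ) + t.toNat : ℕ) = t.toNat by omega]; exact harc0))
  have hreach : (G \ SimpleGraph.fromEdgeSet {e'}).Reachable (per c j) x1 :=
    ((wtail.append warc).reverse).reachable
  exact (SimpleGraph.isBridge_iff.mp hbr) hreach

lemma no_chord (hG : G.Connected) (hcard : G.edgeSet.ncard = Fintype.card V)
    (hc : c.IsCycle) {j : ℤ} {x : V} (hadj : G.Adj (per c j) x)
    (hne : s(per c j, x) ∉ c.edges) : x ∉ Set.range (per c) := by
  rintro ⟨j', rfl⟩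
  have hadj2 : (G.deleteEdges {e | e ∈ c.edges}).Adj (per c j) (per c j') :=
    SimpleGraph.deleteEdges_adj.mpr ⟨hadj, by simpa using hne⟩
  exact hadj.ne (core_sep hG hcard hc hadj2.reachable)

lemma master (hG : G.Connected) (hcard : G.edgeSet.ncard = Fintype.card V) (hc : c.IsCycle) :
    ∀ M : ℕ, ∀ d : ℕ → V, (∀ k < M, G.Adj (d k) (d (k + 1))) →
      (∀ k, k + 2 ≤ M → d (k + 2) ≠ d k) → d 0 ∈ Set.range (per c) →
      d M ∈ Set.range (per c) →
      (∀ t ≤ M, d t ∈ Set.range (per c)) ∧ (∀ t < M, s(d t, d (t + 1)) ∈ c.edges) := by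
  intro M
  induction M using Nat.strong_induction_on with
  | _ M IH =>
    intro d hadj hnb h0 hM
    rcases Nat.eq_zero_or_pos M with rfl | hM1
    · refine ⟨fun t ht => ?_, fun t ht => by omega⟩
      have : t = 0 := by omega
      subst this
      exact h0
    by_cases hmid : ∃ k, 1 ≤ k ∧ k < M ∧ d k ∈ Set.range (per c)
    · obtain ⟨k, hk1, hkM, hkmem⟩ := hmid
      obtain ⟨A1, B1⟩ := IH k (by omega) d (fun t ht => hadj t (by omega))
        (fun t ht => hnb t (by omega)) h0 hkmem
      obtain ⟨A2, B2⟩ := IH (M - k) (by omega) (fun t => d (k + t))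
        (fun t ht => by
          have := hadj (k + t) (by omega)
          rwa [show k + t + 1 = k + (t + 1) by omega] at this)
        (fun t ht => by
          have := hnb (k + t) (by omega)
          rwa [show k + t + 2 = k + (t + 2) by omega] at this)
        hkmem (by show d (k + (M - k)) ∈ Set.range (per c)
                  rw [show k + (M - k) = M by omega]; exact hM)
      constructor
      · intro t ht
        rcases le_or_gt t k with h | h
        · exact A1 t h
        · have := A2 (t - k) (by omega)
          rwa [show k + (t - k) = t by omega] at this
      · intro t ht
        rcases lt_or_ge t k with h | h
        · exact B1 t h
        · have := B2 (t - k) (by omega)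
          rwa [show k + (t - k) = t by omega, show k + (t - k + 1) = t + 1 by omega] at this
    · push_neg at hmid
      rcases eq_or_lt_of_le (Nat.succ_le_of_lt hM1) with hM2 | hM2
      · -- M = 1 : a single edge between two core vertices must be a cycle edge
        have hMeq : M = 1 := hM2.symm
        subst hMeq
        obtain ⟨j, hj⟩ := h0
        have hpair : s(d 0, d 1) ∈ c.edges := by
          by_contra hne
          rw [← hj] at hne
          exact (no_chord hG hcard hc (hj ▸ hadj 0 (by omega)) hne) hM
        refine ⟨fun t ht => ?_, fun t ht => ?_⟩
        · interval_cases t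
          · exact ⟨j, hj⟩
          · exact hM
        · have : t = 0 := by omega
          subst this
          exact hpair
      · -- M ≥ 2 and no interior core vertices : impossible
        exfalso
        set G2 := G.deleteEdges {e | e ∈ c.edges} with hG2
        have hedge2 : ∀ t, t < M → G2.Adj (d t) (d (t + 1)) := by
          intro t ht
          refine SimpleGraph.deleteEdges_adj.mpr ⟨hadj t ht, ?_⟩
          simp only [Set.mem_setOf_eq]
          intro hmem
          rcases Nat.eq_zero_or_pos t with rfl | ht1
          · exact hmid 1 le_rfl (by omega) (edge_endpoint_mem hc hmem).2
          · exact hmid t (by omega) (by omega) (edge_endpoint_mem hc hmem).1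
        obtain ⟨d', hd'eq, hd'adj⟩ := chain_ext G2 d M (by omega) hedge2
        obtain ⟨j0, hj0⟩ := h0
        obtain ⟨jM, hjM⟩ := hM
        have hw : G2.Walk (per c j0) (per c jM) :=
          (chainWalk G2 d' hd'adj 0 M).copy
            (by rw [hd'eq 0 (by omega), hj0])
            (by rw [Nat.zero_add, hd'eq M le_rfl, hjM])
        have heq := core_sep hG hcard hc hw.reachable
        rw [hj0, hjM] at heq
        exact acyclic_chain_seg (G2_acyclic hG hcard hc) M (by omega) d M hedge2
          (fun t ht => hnb t ht) 0 (by omega) (by rw [Nat.zero_add]; exact heq.symm)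

lemma zchain_on_core (hG : G.Connected) (hcard : G.edgeSet.ncard = Fintype.card V)
    (hc : c.IsCycle) (h' : ℤ → V) (hadj : ∀ k, G.Adj (h' k) (h' (k + 1)))
    (hnb : ∀ k, h' (k + 2) ≠ h' k) :
    ∀ k : ℤ, h' k ∈ Set.range (per c) ∧ s(h' k, h' (k + 1)) ∈ c.edges := by
  have G2ac := G2_acyclic hG hcard hc
  set G2 := G.deleteEdges {e | e ∈ c.edges} with hG2
  have key : ∀ (s : ℤ) (σ : ℤ), (σ = 1 ∨ σ = -1) → ∃ n : ℕ, h' (s + σ * n) ∈ Set.range (per c) := by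
    intro s σ hσ
    by_contra hno
    push_neg at hno
    set r : ℕ → V := fun n => h' (s + σ * n) with hr
    have hradj : ∀ n : ℕ, G2.Adj (r n) (r (n + 1)) := by
      intro n
      have hGadj : G.Adj (r n) (r (n + 1)) := by
        rcases hσ with rfl | rfl
        · have := hadj (s + n)
          rwa [show s + (n:ℤ) + 1 = s + 1 * ((n:ℕ) + 1 : ℕ) by push_cast; ring,
            show s + (n:ℤ) = s + 1 * (n:ℤ) by ring] at this
        · have := (hadj (s + -1 * ((n + 1 : ℕ) : ℤ))).symm
          rwa [show s + -1 * ((n + 1 : ℕ) : ℤ) + 1 = s + -1 * (n:ℤ) by push_cast; ring] at this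
      refine SimpleGraph.deleteEdges_adj.mpr ⟨hGadj, ?_⟩
      simp only [Set.mem_setOf_eq]
      intro hmem
      exact hno n (edge_endpoint_mem hc hmem).1
    have hrnb : ∀ n : ℕ, r (n + 2) ≠ r n := by
      intro n
      rcases hσ with rfl | rfl
      · have := hnb (s + n)
        rwa [show s + (n:ℤ) + 2 = s + 1 * ((n:ℕ) + 2 : ℕ) by push_cast; ring,
          show s + (n:ℤ) = s + 1 * (n:ℤ) by ring] at this
      · intro h
        apply hnb (s + -1 * ((n + 2 : ℕ) : ℤ))
        rw [show s + -1 * ((n + 2 : ℕ) : ℤ) + 2 = s + -1 * (n:ℤ) by push_cast; ring]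
        exact h.symm
    have hmono : ∀ a b : ℕ, a < b → r b ≠ r a := by
      intro a b hab heq
      have h2 := acyclic_chain_seg G2ac (b - a) (by omega) r b (fun t _ => hradj t)
        (fun t _ => hrnb t) a (by omega)
      rw [show a + (b - a) = b by omega] at h2
      exact h2 heq
    have hinj : Function.Injective r := by
      intro a b hab
      rcases lt_trichotomy a b with h | h | h
      · exact absurd hab.symm (hmono a b h)
      · exact h
      · exact absurd hab (hmono b a h)
    haveI := Finite.of_injective r hinj
    exact not_finite ℕ
  intro k
  obtain ⟨n1, hn1⟩ := key k (-1) (Or.inr rfl)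
  obtain ⟨n2, hn2⟩ := key (k + 1) 1 (Or.inl rfl)
  set k1 : ℤ := k + -1 * n1 with hk1
  set k2 : ℤ := (k + 1) + 1 * n2 with hk2
  have hk1le : k1 ≤ k := by omega
  have hk2ge : k + 1 ≤ k2 := by omega
  set M : ℕ := (k2 - k1).toNat with hM
  have hMpos : 0 < M := by omega
  obtain ⟨A, B⟩ := master hG hcard hc M (fun t => h' (k1 + t))
    (fun t ht => by
      have := hadj (k1 + t)
      rwa [show k1 + (t:ℤ) + 1 = k1 + ((t + 1 : ℕ) : ℤ) by push_cast; ring] at this)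
    (fun t ht => by
      have := hnb (k1 + t)
      rwa [show k1 + (t:ℤ) + 2 = k1 + ((t + 2 : ℕ) : ℤ) by push_cast; ring] at this)
    (by show h' (k1 + ((0:ℕ):ℤ)) ∈ Set.range (per c)
        rw [show k1 + ((0:ℕ):ℤ) = k1 by push_cast; ring]; exact hn1)
    (by show h' (k1 + ((M:ℕ):ℤ)) ∈ Set.range (per c)
        rw [show k1 + ((M:ℕ):ℤ) = k2 by omega]; exact hn2)
  set t0 : ℕ := (k - k1).toNat with ht0
  have e1 : k1 + ((t0:ℕ):ℤ) = k := by omega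
  have e2 : k1 + ((t0 + 1:ℕ):ℤ) = k + 1 := by push_cast; omega
  constructor
  · have := A t0 (by omega)
    rwa [e1] at this
  · have := B t0 (by omega)
    rwa [e1, e2] at this

end Unicyclic


section Up
variable {V T : Type*} [Fintype V] {G : SimpleGraph V} {U : SimpleGraph T} {f : T → V}
  {v0 : V} {c : G.Walk v0 v0}

/-- A vertex of `U` joined to `g2 m` by an edge lying over a cycle edge must be one of the
two neighbours of `g2 m` on the lifted path. -/
lemma cp_unique (hf : GraphCoveringMap U G f) (hc : c.IsCycle) {g2 : ℤ → T}
    (hadj2 : ∀ k, U.Adj (g2 k) (g2 (k + 1))) (hinj2 : Function.Injective g2)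
    (hcore2 : ∀ k, f (g2 k) ∈ Set.range (per c) ∧ s(f (g2 k), f (g2 (k + 1))) ∈ c.edges)
    (m : ℤ) {x : T} (hx : U.Adj (g2 m) x) (hxe : s(f (g2 m), f x) ∈ c.edges) :
    x = g2 (m + 1) ∨ x = g2 (m - 1) := by
  obtain ⟨j, hj⟩ := (hcore2 m).1
  have hplus : s(f (g2 m), f (g2 (m + 1))) ∈ c.edges := (hcore2 m).2
  have hminus : s(f (g2 m), f (g2 (m - 1))) ∈ c.edges := by
    have := (hcore2 (m - 1)).2
    rw [show m - 1 + 1 = m by ring] at this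
    rwa [Sym2.eq_swap] at this
  rw [← hj] at hplus hminus hxe
  have hadjm : U.Adj (g2 m) (g2 (m - 1)) := by
    have := (hadj2 (m - 1)).symm
    rwa [show m - 1 + 1 = m by ring] at this
  have hxnbr := per_nbr hc hxe
  have hpnbr := per_nbr hc hplus
  have hmnbr := per_nbr hc hminus
  have hne2 : f (g2 (m + 1)) ≠ f (g2 (m - 1)) := by
    intro h
    have := hinj2 (cov_loc_inj hf (hadj2 m) hadjm h)
    omega
  have hsn := per_succ_ne_pred hc j
  have hfin : f x = f (g2 (m + 1)) ∨ f x = f (g2 (m - 1)) := by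
    rcases hxnbr with h1 | h1 <;> rcases hpnbr with h2 | h2 <;> rcases hmnbr with h3 | h3 <;>
      first
        | (exact Or.inl (h1.trans h2.symm))
        | (exact Or.inr (h1.trans h3.symm))
        | (exact absurd (h2.trans h3.symm) hne2)
  rcases hfin with h | h
  · exact Or.inl (cov_loc_inj hf hx (hadj2 m) h)
  · exact Or.inr (cov_loc_inj hf hx hadjm h)

lemma range_subset_of_meet (hf : GraphCoveringMap U G f) (hc : c.IsCycle) {g1 g2 : ℤ → T}
    (hadj1 : ∀ k, U.Adj (g1 k) (g1 (k + 1))) (hadj2 : ∀ k, U.Adj (g2 k) (g2 (k + 1)))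
    (hinj2 : Function.Injective g2)
    (hcore1 : ∀ k, f (g1 k) ∈ Set.range (per c) ∧ s(f (g1 k), f (g1 (k + 1))) ∈ c.edges)
    (hcore2 : ∀ k, f (g2 k) ∈ Set.range (per c) ∧ s(f (g2 k), f (g2 (k + 1))) ∈ c.edges)
    {a b : ℤ} (hmeet : g1 a = g2 b) : Set.range g1 ⊆ Set.range g2 := by
  have main : ∀ n : ℕ, g1 (a + n) ∈ Set.range g2 ∧ g1 (a - n) ∈ Set.range g2 := by
    intro n
    induction n with
    | zero => constructor <;> (simp only [Int.ofNat_zero, add_zero, sub_zero]; exact ⟨b, hmeet.symm⟩)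
    | succ n ih =>
        obtain ⟨⟨m, hm⟩, ⟨m', hm'⟩⟩ := ih
        constructor
        · have hx : U.Adj (g2 m) (g1 (a + n + 1)) := by
            rw [hm]
            exact hadj1 (a + n)
          have hxe : s(f (g2 m), f (g1 (a + n + 1))) ∈ c.edges := by
            rw [hm]
            exact (hcore1 (a + n)).2
          rcases cp_unique hf hc hadj2 hinj2 hcore2 m hx hxe with h | h
          · exact ⟨m + 1, by rw [← h]; congr 1; push_cast; ring⟩
          · exact ⟨m - 1, by rw [← h]; congr 1; push_cast; ring⟩
        · have hx : U.Adj (g2 m') (g1 (a - n - 1)) := by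
            rw [hm']
            have := (hadj1 (a - n - 1)).symm
            rwa [show a - n - 1 + 1 = a - n by ring] at this
          have hxe : s(f (g2 m'), f (g1 (a - n - 1))) ∈ c.edges := by
            rw [hm']
            have := (hcore1 (a - n - 1)).2
            rw [show a - n - 1 + 1 = a - n by ring] at this
            rwa [Sym2.eq_swap] at this
          rcases cp_unique hf hc hadj2 hinj2 hcore2 m' hx hxe with h | h
          · exact ⟨m' + 1, by rw [← h]; congr 1; push_cast; ring⟩
          · exact ⟨m' - 1, by rw [← h]; congr 1; push_cast; ring⟩
  rintro x ⟨i, rfl⟩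
  rcases le_or_gt a i with h | h
  · have := (main (i - a).toNat).1
    rwa [show a + ((i - a).toNat : ℤ) = i by omega] at this
  · have := (main (a - i).toNat).2
    rwa [show a - ((a - i).toNat : ℤ) = i by omega] at this

/-- Two injective chains in a tree with the same range traverse the same edges. -/
lemma pair_transfer {U : SimpleGraph T} (hUac : U.IsAcyclic) {g1 g2 : ℤ → T}
    (hadj1 : ∀ k, U.Adj (g1 k) (g1 (k + 1))) (hadj2 : ∀ k, U.Adj (g2 k) (g2 (k + 1)))
    (hinj2 : Function.Injective g2) (hrange : Set.range g1 ⊆ Set.range g2) (k : ℤ) :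
    ∃ m : ℤ, g1 k = g2 m ∧ g1 (k + 1) = g2 (m + 1) ∨ g1 k = g2 (m + 1) ∧ g1 (k + 1) = g2 m := by
  obtain ⟨a, ha⟩ := hrange ⟨k, rfl⟩
  obtain ⟨b, hb⟩ := hrange ⟨k + 1, rfl⟩
  have hadjab : U.Adj (g2 a) (g2 b) := by
    rw [ha, hb]
    exact hadj1 k
  rcases acyclic_zchain_no_chord hUac g2 hadj2 hinj2 hadjab with h | h
  · exact ⟨a, Or.inl ⟨ha.symm, by rw [← hb, h]⟩⟩
  · exact ⟨b, Or.inr ⟨by rw [← ha, h]; ring_nf, hb.symm⟩⟩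

end Up


lemma fund_cycle {V : Type*} [Fintype V] {G t : SimpleGraph V} (htree : t.IsTree) (ht : t ≤ G)
    {e : Sym2 V} (heG : e ∈ G.edgeSet) (het : e ∉ t.edgeSet) :
    ∃ (x : V) (cc : G.Walk x x), cc.IsCycle ∧ e ∈ cc.edges ∧
      ∀ e' ∈ cc.edges, e' ≠ e → e' ∈ t.edgeSet := by
  revert heG het
  induction e using Sym2.ind with
  | _ x y =>
    intro heG het
    have hadj : G.Adj x y := heG
    obtain ⟨p, hp, -⟩ := htree.existsUnique_path y x
    have hsub : ∀ e' ∈ p.edges, e' ∈ G.edgeSet := fun e' he' =>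
      SimpleGraph.edgeSet_mono ht (p.edges_subset_edgeSet he')
    set pG := p.transfer G hsub with hpG
    have hpGpath : pG.IsPath := hp.transfer hsub
    have hnot : s(x, y) ∉ pG.edges := by
      rw [hpG, SimpleGraph.Walk.edges_transfer]
      intro hmem
      exact het (p.edges_subset_edgeSet hmem)
    refine ⟨x, SimpleGraph.Walk.cons hadj pG, ?_, ?_, ?_⟩
    · exact (SimpleGraph.Walk.cons_isCycle_iff pG hadj).mpr ⟨hpGpath, hnot⟩
    · rw [SimpleGraph.Walk.edges_cons]; exact List.mem_cons_self
    · intro e' he' hne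
      rw [SimpleGraph.Walk.edges_cons] at he'
      rcases List.mem_cons.1 he' with h | h
      · exact absurd h hne
      · rw [hpG, SimpleGraph.Walk.edges_transfer] at h
        exact p.edges_subset_edgeSet h

theorem main_thm {V : Type} [Fintype V] (G : SimpleGraph V) (hG : G.Connected) (T : Type)
    (U : SimpleGraph T) (hU : U.IsTree) (f : T → V) (hf : GraphCoveringMap U G f) :
    (Nat.card G.edgeSet = Fintype.card V) ↔
      ∃ g : ℤ → T, Function.Injective g ∧ (∀ k : ℤ, U.Adj (g k) (g (k + 1))) ∧
        ∀ g' : ℤ → T, Function.Injective g' → (∀ k : ℤ, U.Adj (g' k) (g' (k + 1))) →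
          Set.range g' = Set.range g := by
  classical
  obtain ⟨hUconn, hUac⟩ := hU
  rw [Nat.card_coe_set_eq]
  constructor
  · intro hm
    have hnac : ¬ G.IsAcyclic := by
      intro hac
      haveI : Fintype ↥G.edgeSet := Fintype.ofFinite _
      have h0 := SimpleGraph.IsTree.card_edgeFinset ⟨hG, hac⟩
      have h1 : G.edgeFinset.card = G.edgeSet.ncard := by rw [Set.ncard_eq_toFinset_card']; convert rfl; ext; simp
      omega
    rw [SimpleGraph.IsAcyclic] at hnac
    push_neg at hnac
    obtain ⟨v0, c, hc⟩ := hnac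
    obtain ⟨u0, hu0⟩ := hf.1 (per c 0)
    obtain ⟨g, hg0, hgadj, hgf⟩ := cov_lift_zchain hf (per c) (per_adj hc) u0 hu0
    have hgnb : ∀ k, g (k + 2) ≠ g k := by
      intro k h
      exact per_nb hc k (by rw [← hgf, ← hgf, h])
    have hginj : Function.Injective g := acyclic_zchain_inj hUac g hgadj hgnb
    have hcoreg : ∀ k, f (g k) ∈ Set.range (per c) ∧ s(f (g k), f (g (k + 1))) ∈ c.edges := by
      intro k
      rw [hgf, hgf]
      exact ⟨⟨k, rfl⟩, per_pair_mem hc k⟩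
    refine ⟨g, hginj, hgadj, ?_⟩
    intro g' hg'inj hg'adj
    have hg'nb : ∀ k : ℤ, f (g' (k + 2)) ≠ f (g' k) := by
      intro k h
      have h1 : U.Adj (g' (k + 1)) (g' (k + 2)) := by
        have := hg'adj (k + 1)
        rwa [show k + 1 + 1 = k + 2 by ring] at this
      have h2 := hginj
      have := hg'inj (cov_loc_inj hf h1 (hg'adj k).symm h)
      omega
    have hcore' := zchain_on_core hG hm hc (fun k => f (g' k))
      (fun k => hf.2.1 (hg'adj k)) hg'nb
    by_cases hshare : ∃ a b : ℤ, g' a = g b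
    · obtain ⟨a, b, hab⟩ := hshare
      apply Set.Subset.antisymm
      · exact range_subset_of_meet hf hc hg'adj hgadj hginj hcore' hcoreg hab
      · exact range_subset_of_meet hf hc hgadj hg'adj hg'inj hcoreg hcore' hab.symm
    · exfalso
      push_neg at hshare
      have hAne : ∃ n : ℕ, ∃ (k k' : ℤ) (w : U.Walk (g k) (g' k')), w.length = n := by
        obtain ⟨w⟩ := hUconn.preconnected (g 0) (g' 0)
        exact ⟨w.length, 0, 0, w, rfl⟩
      set n0 := Nat.find hAne with hn0
      obtain ⟨k, k', w, hw⟩ := Nat.find_spec hAne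
      set wp := w.bypass with hwp
      have hwppath : wp.IsPath := w.bypass_isPath
      have hwplen : wp.length = n0 := by
        have h1 : wp.length ≤ Nat.find hAne := by rw [← hw]; exact w.length_bypass_le
        have h2 : Nat.find hAne ≤ wp.length := Nat.find_le ⟨k, k', wp, rfl⟩
        omega
      have hn0pos : 0 < n0 := by
        rcases Nat.eq_zero_or_pos n0 with h | h
        · exact absurd (SimpleGraph.Walk.eq_of_length_eq_zero
            (show wp.length = 0 by omega)).symm (hshare k' k)
        · exact h
      set x1 := wp.getVert 1 with hx1
      have hadjx : U.Adj (g k) x1 := by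
        have := wp.adj_getVert_succ (i := 0) (by omega)
        rwa [SimpleGraph.Walk.getVert_zero] at this
      have hx1notg : x1 ∉ Set.range g := by
        rintro ⟨k2, hk2⟩
        have hnnil : ¬ wp.Nil := by
          rw [SimpleGraph.Walk.not_nil_iff_lt_length]
          omega
        have htl : n0 - 1 ∈ {n : ℕ | ∃ (k k' : ℤ) (w : U.Walk (g k) (g' k')), w.length = n} := by
          refine ⟨k2, k', wp.tail.copy hk2.symm rfl, ?_⟩
          rw [SimpleGraph.Walk.length_copy]
          have := SimpleGraph.Walk.length_tail_add_one hnnil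
          omega
        have h4 : Nat.find hAne ≤ n0 - 1 := Nat.find_le htl
        omega
      have hnb' : ∀ t : ℕ, t + 2 ≤ n0 → f (wp.getVert (t + 2)) ≠ f (wp.getVert t) := by
        intro t ht h
        have h1 : U.Adj (wp.getVert (t + 1)) (wp.getVert (t + 2)) :=
          wp.adj_getVert_succ (by omega)
        have h2 : U.Adj (wp.getVert (t + 1)) (wp.getVert t) :=
          (wp.adj_getVert_succ (by omega)).symm
        have h3 := cov_loc_inj hf h1 h2 h
        have := path_getVert_inj hwppath (t + 2) t (by omega) (by omega) h3
        omega
      obtain ⟨-, B⟩ := master hG hm hc n0 (fun t => f (wp.getVert t))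
        (fun t ht => hf.2.1 (wp.adj_getVert_succ (by omega))) hnb'
        (by show f (wp.getVert 0) ∈ Set.range (per c)
            rw [SimpleGraph.Walk.getVert_zero, hgf k]
            exact ⟨k, rfl⟩)
        (by show f (wp.getVert n0) ∈ Set.range (per c)
            have hend : wp.getVert n0 = g' k' := by
              rw [← hwplen, SimpleGraph.Walk.getVert_length]
            rw [hend]
            exact (hcore' k').1)
      have hpair : s(f (g k), f x1) ∈ c.edges := by
        have hB0 := B 0 (by omega)
        rwa [SimpleGraph.Walk.getVert_zero] at hB0
      rcases cp_unique hf hc hgadj hginj hcoreg k hadjx hpair with h | h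
      · exact hx1notg ⟨k + 1, h.symm⟩
      · exact hx1notg ⟨k - 1, h.symm⟩
  · rintro ⟨g, hginj, hgadj, huniq⟩
    have hgnbV : ∀ k : ℤ, f (g (k + 2)) ≠ f (g k) := by
      intro k h
      have h1 : U.Adj (g (k + 1)) (g (k + 2)) := by
        have := hgadj (k + 1)
        rwa [show k + 1 + 1 = k + 2 by ring] at this
      have := hginj (cov_loc_inj hf h1 (hgadj k).symm h)
      omega
    have hnac : ¬ G.IsAcyclic := by
      intro hac
      have hmono : ∀ a b : ℕ, a < b → f (g (b : ℤ)) ≠ f (g (a : ℤ)) := by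
        intro a b hab
        have h2 := acyclic_chain_seg hac (b - a) (by omega) (fun n : ℕ => f (g (n : ℤ))) b
          (fun t ht => by
            have := hf.2.1 (hgadj t)
            rwa [show (t : ℤ) + 1 = ((t + 1 : ℕ) : ℤ) by push_cast; ring] at this)
          (fun t ht => by
            have := hgnbV t
            rwa [show (t : ℤ) + 2 = ((t + 2 : ℕ) : ℤ) by push_cast; ring] at this)
          a (by omega)
        rwa [show a + (b - a) = b by omega] at h2
      have hinj : Function.Injective (fun n : ℕ => f (g (n : ℤ))) := by
        intro a b hab
        rcases lt_trichotomy a b with h | h | h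
        · exact absurd hab.symm (hmono a b h)
        · exact h
        · exact absurd hab (hmono b a h)
      haveI := Finite.of_injective _ hinj
      exact not_finite ℕ
    have hle : Fintype.card V ≤ G.edgeSet.ncard + 1 := card_le_of_connected hG
    have hge : Fintype.card V ≤ G.edgeSet.ncard := by
      by_contra hlt
      push_neg at hlt
      exact hnac (acyclic_of_card hG (by omega))
    by_contra hnem
    have hmgt : Fintype.card V < G.edgeSet.ncard := by omega
    obtain ⟨t, ht, htree⟩ := exists_spanning_tree _ G rfl hG
    haveI : Fintype ↥t.edgeSet := Fintype.ofFinite _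
    have htcard : t.edgeSet.ncard + 1 = Fintype.card V := by
      have h0 := htree.card_edgeFinset
      have h1 : t.edgeFinset.card = t.edgeSet.ncard := by rw [Set.ncard_eq_toFinset_card']; convert rfl; ext; simp
      omega
    have hdiff : 1 < (G.edgeSet \ t.edgeSet).ncard := by
      rw [Set.ncard_diff (SimpleGraph.edgeSet_mono ht) (Set.toFinite _)]
      have := Set.ncard_le_ncard (SimpleGraph.edgeSet_mono ht) (Set.toFinite G.edgeSet)
      omega
    obtain ⟨e1, e2, he1, he2, hne12⟩ := (Set.one_lt_ncard_iff (Set.toFinite _)).mp hdiff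
    obtain ⟨x1, c1, hc1, he1c1, hothers1⟩ := fund_cycle htree ht he1.1 he1.2
    obtain ⟨x2, c2, hc2, he2c2, hothers2⟩ := fund_cycle htree ht he2.1 he2.2
    obtain ⟨u1, hu1⟩ := hf.1 (per c1 0)
    obtain ⟨g1, hg10, hg1adj, hg1f⟩ := cov_lift_zchain hf (per c1) (per_adj hc1) u1 hu1
    have hg1inj : Function.Injective g1 := acyclic_zchain_inj hUac g1 hg1adj
      (fun k h => per_nb hc1 k (by rw [← hg1f, ← hg1f, h]))
    obtain ⟨u2, hu2⟩ := hf.1 (per c2 0)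
    obtain ⟨g2, hg20, hg2adj, hg2f⟩ := cov_lift_zchain hf (per c2) (per_adj hc2) u2 hu2
    have hg2inj : Function.Injective g2 := acyclic_zchain_inj hUac g2 hg2adj
      (fun k h => per_nb hc2 k (by rw [← hg2f, ← hg2f, h]))
    have hr1 := huniq g1 hg1inj hg1adj
    have hr2 := huniq g2 hg2inj hg2adj
    have hsub : Set.range g1 ⊆ Set.range g2 := by rw [hr1, ← hr2]
    obtain ⟨kk, hkk⟩ := mem_edges_per hc1 he1c1
    obtain ⟨mm, hmm⟩ := pair_transfer hUac hg1adj hg2adj hg2inj hsub kk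
    have hmem2 : e1 ∈ c2.edges := by
      rcases hmm with ⟨ha, hb⟩ | ⟨ha, hb⟩
      · rw [hkk, ← hg1f kk, ← hg1f (kk + 1), ha, hb, hg2f mm, hg2f (mm + 1)]
        exact per_pair_mem hc2 mm
      · rw [hkk, ← hg1f kk, ← hg1f (kk + 1), ha, hb, hg2f mm, hg2f (mm + 1), Sym2.eq_swap]
        exact per_pair_mem hc2 mm
    rcases eq_or_ne e1 e2 with h | h
    · exact hne12 h
    · exact he1.2 (hothers2 e1 hmem2 h)

end UIPAux

/-- A connected finite graph `G` is unicyclic (its number of edges equals its number of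
vertices, i.e. it contains exactly one cycle) if and only if its universal cover — any tree
`U` admitting a covering map onto `G` — contains a unique two-way infinite path. -/
theorem unicyclic_iff_unique_infinite_path {V : Type} [Fintype V] (G : SimpleGraph V)
    (hG : G.Connected) (T : Type) (U : SimpleGraph T) (hU : U.IsTree) (f : T → V)
    (hf : GraphCoveringMap U G f) :
    (Nat.card G.edgeSet = Fintype.card V) ↔
      ∃ g : ℤ → T, Function.Injective g ∧ (∀ k : ℤ, U.Adj (g k) (g (k + 1))) ∧
        ∀ g' : ℤ → T, Function.Injective g' → (∀ k : ℤ, U.Adj (g' k) (g' (k + 1))) →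
          Set.range g' = Set.range g :=
  UIPAux.main_thm G hG T U hU f hf
end

section
/- Let G and H be graphs, let x be a vertex of the 2-core of G and y a vertex of the 2-core of H, and let T_x (resp. T_y) be the rooted tree hanging at x (resp. y) that meets the 2-core only at its root. If T_x and T_y are not isomorphic as rooted trees, then the final color-refinement colors of x (in G) and y (in H) differ. -/
open SimpleGraph Filter MeasureTheory

section basics
variable {A B C : Type*} {G : SimpleGraph A} {H : SimpleGraph B} {K : SimpleGraph C}

lemma crStep_succ {i u v} : crStep G H (i+1) u v ↔
    (crStep G H i u v ∧ ∃ e : G.neighborSet u ≃ H.neighborSet v,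
      ∀ x : G.neighborSet u, crStep G H i (x : A) ((e x : H.neighborSet v) : B)) := Iff.rfl

lemma crStep_mono {i u v} (h : crStep G H (i+1) u v) : crStep G H i u v := h.1

lemma crStep_le {i j u v} (hij : i ≤ j) (h : crStep G H j u v) : crStep G H i u v := by
  induction j with
  | zero => simpa [Nat.le_zero.mp hij] using h
  | succ n ih =>
    rcases Nat.lt_or_ge i (n+1) with hlt | hge
    · exact ih (Nat.lt_succ_iff.mp hlt) h.1
    · have : i = n + 1 := le_antisymm hij hge
      simpa [this] using h

lemma crStep_trans : ∀ (i : ℕ) {u v w}, crStep G H i u v → crStep H K i v w → crStep G K i u w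
  | 0, _, _, _, _, _ => trivial
  | i + 1, u, v, w, h₁, h₂ => by
    obtain ⟨h₁', e₁, he₁⟩ := h₁
    obtain ⟨h₂', e₂, he₂⟩ := h₂
    exact ⟨crStep_trans i h₁' h₂', e₁.trans e₂, fun z =>
      crStep_trans i (he₁ z) (he₂ (e₁ z))⟩

lemma crStep_symm : ∀ (i : ℕ) {u v}, crStep G H i u v → crStep H G i v u
  | 0, _, _, _ => trivial
  | i + 1, u, v, h => by
    obtain ⟨h', e, he⟩ := h
    refine ⟨crStep_symm i h', e.symm, fun z => ?_⟩
    have := he (e.symm z)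
    rw [Equiv.apply_symm_apply] at this
    exact crStep_symm i this
end basics

section stab
variable {V W : Type*} [Finite V] [Finite W] (G : SimpleGraph V) (H : SimpleGraph W)

lemma crStep_stab : ∃ N : ℕ, ∀ u v, crStep G H N u v ↔ ∀ i, crStep G H i u v := by
  classical
  set f : ℕ → Set (V × W) := fun i => {p | crStep G H i p.1 p.2} with hf
  have hsub : ∀ {i j}, i ≤ j → f j ⊆ f i := by
    intro i j hij p hp
    exact crStep_le hij hp
  set n : ℕ → ℕ := fun i => (f i).ncard with hn
  have hne : (Set.range n).Nonempty := ⟨n 0, ⟨0, rfl⟩⟩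
  obtain ⟨N, hN⟩ := Nat.sInf_mem hne
  have hkey : ∀ m, N ≤ m → f m = f N := by
    intro m hm
    refine Set.eq_of_subset_of_ncard_le (hsub hm) ?_ (Set.toFinite _)
    have h1 : n N ≤ n m := by
      rw [hN]
      exact Nat.sInf_le ⟨m, rfl⟩
    exact h1
  refine ⟨N, fun u v => ⟨fun h i => ?_, fun h => h N⟩⟩
  rcases le_or_gt i N with hi | hi
  · exact crStep_le hi h
  · have : f i = f N := hkey i hi.le
    have : (u, v) ∈ f i := by rw [this]; exact h
    exact this

/-- The stable relation. -/
def crR (u : V) (v : W) : Prop := ∀ i, crStep G H i u v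

lemma crR_bisim {u v} (h : crR G H u v) :
    ∃ e : G.neighborSet u ≃ H.neighborSet v, ∀ z : G.neighborSet u,
      crR G H (z : V) ((e z : H.neighborSet v) : W) := by
  obtain ⟨N, hN⟩ := crStep_stab G H
  obtain ⟨-, e, he⟩ := h (N + 1)
  exact ⟨e, fun z => (hN _ _).mp (he z)⟩

end stab

section core
variable {V W : Type*} {G : SimpleGraph V} {H : SimpleGraph W}

lemma mem_twoCore_of {S : Set V} (hS : IsTwoCoreSet G S) {v : V} (hv : v ∈ S) :
    v ∈ twoCore G := Set.mem_sUnion.mpr ⟨S, hS, hv⟩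

lemma isTwoCoreSet_twoCore : IsTwoCoreSet G (twoCore G) := by
  intro v hv
  obtain ⟨S, hS, hvS⟩ := hv
  obtain ⟨a, b, hab, ha, hb, hva, hvb⟩ := hS v hvS
  exact ⟨a, b, hab, mem_twoCore_of hS ha, mem_twoCore_of hS hb, hva, hvb⟩

lemma crR_mem_twoCore [Finite V] [Finite W] {u : V} {v : W}
    (h : crR G H u v) (hu : u ∈ twoCore G) : v ∈ twoCore H := by
  set S' : Set W := {w | ∃ u', u' ∈ twoCore G ∧ crR G H u' w} with hS'
  have : IsTwoCoreSet H S' := by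
    rintro w ⟨u', hu', huw⟩
    obtain ⟨a, b, hab, ha, hb, hva, hvb⟩ := isTwoCoreSet_twoCore u' hu'
    obtain ⟨e, he⟩ := crR_bisim G H huw
    refine ⟨e ⟨a, hva⟩, e ⟨b, hvb⟩, ?_, ⟨a, ha, he ⟨a, hva⟩⟩, ⟨b, hb, he ⟨b, hvb⟩⟩,
      (e ⟨a, hva⟩).2, (e ⟨b, hvb⟩).2⟩
    intro hcon
    have : (⟨a, hva⟩ : G.neighborSet u') = ⟨b, hvb⟩ := e.injective (Subtype.ext hcon)
    exact hab (congrArg Subtype.val this)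
  exact mem_twoCore_of this ⟨u, hu, h⟩

lemma crR_symm {u : V} {v : W} (h : crR G H u v) : crR H G v u :=
  fun i => crStep_symm i (h i)

lemma crR_twoCore_iff [Finite V] [Finite W] {u : V} {v : W} (h : crR G H u v) :
    u ∈ twoCore G ↔ v ∈ twoCore H :=
  ⟨fun hu => crR_mem_twoCore h hu, fun hv => crR_mem_twoCore (crR_symm h) hv⟩

lemma crR_zigzag {a a' : V} {b b' : W} (h1 : crR G H a b) (h2 : crR G H a' b)
    (h3 : crR G H a' b') : crR G H a b' :=
  fun i => crStep_trans i (crStep_trans i (h1 i) (crStep_symm i (h2 i))) (h3 i)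

end core

section treeset
variable {V : Type*} {G : SimpleGraph V} {x : V}

open SimpleGraph.Walk

lemma treeSet_root_or_noncore {v : V} (hv : v ∈ treeSet G x) : v = x ∨ v ∉ twoCore G := by
  obtain ⟨w, hw⟩ := hv
  exact hw v w.end_mem_support

lemma treeSet_extend {v z : V} (hv : v ∈ treeSet G x) (hz : z ∉ twoCore G)
    (hadj : G.Adj v z) : z ∈ treeSet G x := by
  obtain ⟨w, hw⟩ := hv
  refine ⟨w.concat hadj, ?_⟩
  intro t ht
  rw [support_concat, List.mem_append] at ht
  rcases ht with ht | ht
  · exact hw t ht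
  · simp only [List.mem_singleton] at ht
    subst ht
    exact Or.inr hz

lemma mem_treeSet_of_support {v : V} (w : G.Walk x v)
    (hw : ∀ z ∈ w.support, z = x ∨ z ∉ twoCore G) {z : V} (hz : z ∈ w.support) :
    z ∈ treeSet G x := by
  classical
  refine ⟨w.takeUntil z hz, fun t ht => ?_⟩
  exact hw t (w.support_takeUntil_subset hz ht)

/-- An internal vertex of a path has two distinct neighbours on the path. -/
lemma internal_two_neighbors : ∀ {a b : V} (w : G.Walk a b), w.IsPath →
    ∀ z ∈ w.support, z ≠ a → z ≠ b →
    ∃ p q, p ≠ q ∧ p ∈ w.support ∧ q ∈ w.support ∧ G.Adj z p ∧ G.Adj z q := by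
  intro a b w
  induction w with
  | nil =>
    intro _ z hz hza _
    simp only [support_nil, List.mem_singleton] at hz
    exact absurd hz hza
  | @cons a a' b h w' ih =>
    intro hp z hz hza hzb
    rw [support_cons, List.mem_cons] at hz
    rcases hz with rfl | hz
    · exact absurd rfl hza
    by_cases hza' : z = a'
    · subst hza'
      cases w' with
      | nil => exact absurd rfl hzb
      | @cons _ a'' _ h₂ w'' =>
        refine ⟨a, a'', ?_, by simp [support_cons], ?_, h.symm, h₂⟩
        · rintro rfl
          rw [cons_isPath_iff] at hp
          exact hp.2 (by simp [support_cons, start_mem_support])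
        · simp [support_cons, start_mem_support]
    · obtain ⟨p, q, hpq, hps, hqs, h1, h2⟩ :=
        ih (((cons_isPath_iff h w').mp hp)).1 z hz hza' hzb
      exact ⟨p, q, hpq, by simp [support_cons, hps], by simp [support_cons, hqs], h1, h2⟩

/-- A path from `u` to `u` is nil. -/
lemma isPath_loop_eq_nil {u : V} (p : G.Walk u u) (hp : p.IsPath) : p = nil :=
  isPath_iff_eq_nil.mp hp

lemma cycle_start_two_neighbors {z : V} (c : G.Walk z z) (hc : c.IsCycle) :
    ∃ p q, p ≠ q ∧ p ∈ c.support ∧ q ∈ c.support ∧ G.Adj z p ∧ G.Adj z q := by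
  classical
  cases c with
  | nil => exact absurd hc IsCycle.not_of_nil
  | @cons _ u _ h p =>
    have hp : p.IsPath := by
      rw [isPath_def]
      have := (isCycle_def _).mp hc
      simpa [support_cons] using this.2.2
    obtain ⟨w, h₂, q, hq⟩ := exists_eq_cons_of_ne h.ne p.reverse
    refine ⟨u, w, ?_, by simp [support_cons, start_mem_support], ?_, h, h₂⟩
    · rintro rfl
      have hqp : q.IsPath := by
        have : p.reverse.IsPath := hp.reverse
        rw [hq, cons_isPath_iff] at this
        exact this.1
      have hqnil : q = nil := isPath_loop_eq_nil q hqp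
      have hlen : p.length = 1 := by
        have := congrArg Walk.length hq
        simpa [hqnil] using this
      have h3 := hc.three_le_length
      simp only [length_cons, hlen] at h3
      omega
    · have : w ∈ p.reverse.support := by
        rw [hq]
        simp [support_cons, start_mem_support]
      rw [support_reverse, List.mem_reverse] at this
      simp [support_cons, this]

/-- Every vertex of a cycle has two distinct neighbours on the cycle. -/
lemma cycle_two_neighbors {a : V} (c : G.Walk a a) (hc : c.IsCycle) :
    ∀ z ∈ c.support, ∃ p q, p ≠ q ∧ p ∈ c.support ∧ q ∈ c.support ∧ G.Adj z p ∧ G.Adj z q := by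
  classical
  intro z hz
  have hrot := hc.rotate hz
  have hsupp : ∀ t, t ∈ (c.rotate z hz).support ↔ t ∈ c.support := by
    intro t
    conv_rhs => rw [← take_spec c hz]
    rw [Walk.rotate]
    rw [mem_support_append_iff, mem_support_append_iff]
    exact or_comm
  obtain ⟨p, q, hpq, hps, hqs, h1, h2⟩ := cycle_start_two_neighbors (c.rotate z hz) hrot
  exact ⟨p, q, hpq, (hsupp p).mp hps, (hsupp q).mp hqs, h1, h2⟩
end treeset

section tree2
variable {V : Type*} {G : SimpleGraph V} {x : V}
open SimpleGraph.Walk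

lemma core_neighbor_eq_root (hx : x ∈ twoCore G) {v c : V} (hv : v ∈ treeSet G x)
    (hvx : v ≠ x) (hc : c ∈ twoCore G) (hadj : G.Adj v c) : c = x := by
  classical
  by_contra hcx
  have hvnc : v ∉ twoCore G := (treeSet_root_or_noncore hv).resolve_left hvx
  obtain ⟨w, hw⟩ := hv
  obtain ⟨P, hP, hPsub⟩ : ∃ P : G.Walk x v, P.IsPath ∧ P.support ⊆ w.support :=
    ⟨w.toPath.val, w.toPath.2, w.support_toPath_subset⟩
  have hPsupp : ∀ z ∈ P.support, z = x ∨ z ∉ twoCore G := fun z hz => hw z (hPsub hz)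
  set T : Set V := {z | z ∈ P.support} ∪ twoCore G with hT
  have hTcore : IsTwoCoreSet G T := by
    intro z hz
    by_cases hzc : z ∈ twoCore G
    · obtain ⟨a, b, hab, ha, hb, h1, h2⟩ := isTwoCoreSet_twoCore z hzc
      exact ⟨a, b, hab, Or.inr ha, Or.inr hb, h1, h2⟩
    · have hzs : z ∈ P.support := by
        rcases hz with hz | hz
        · exact hz
        · exact absurd hz hzc
      have hzx : z ≠ x := fun h => hzc (h ▸ hx)
      by_cases hzv : z = v
      · subst hzv
        obtain ⟨pw, h₂, q, hq⟩ := exists_eq_cons_of_ne hvx P.reverse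
        have hpwP : pw ∈ P.support := by
          have : pw ∈ P.reverse.support := by
            rw [hq]; simp [support_cons, start_mem_support]
          rwa [support_reverse, List.mem_reverse] at this
        have hpwc : pw ≠ c := by
          rcases hPsupp pw hpwP with rfl | hpw
          · exact fun h => hcx h.symm
          · exact fun h => hpw (h ▸ hc)
        exact ⟨pw, c, hpwc, Or.inl hpwP, Or.inr hc, h₂, hadj⟩
      · obtain ⟨p, q, hpq, hps, hqs, h1, h2⟩ :=
          internal_two_neighbors P hP z hzs hzx hzv
        exact ⟨p, q, hpq, Or.inl hps, Or.inl hqs, h1, h2⟩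
  exact hvnc (mem_twoCore_of hTcore (Or.inl P.end_mem_support))

lemma treeSet_acyclic (hx : x ∈ twoCore G) : (G.induce (treeSet G x)).IsAcyclic := by
  intro vv c hc
  set f := (SimpleGraph.Embedding.induce (treeSet G x) (G := G))
  have hinj : Function.Injective f := f.injective
  set c' := c.map f.toHom with hc'def
  have hc' : c'.IsCycle := hc.map hinj
  have hsup : ∀ t ∈ c'.support, t ∈ treeSet G x := by
    intro t ht
    rw [hc'def, Walk.support_map, List.mem_map] at ht
    obtain ⟨z, _, rfl⟩ := ht
    exact z.2
  have hTcore : IsTwoCoreSet G ({z | z ∈ c'.support} ∪ twoCore G) := by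
    intro z hz
    by_cases hzc : z ∈ twoCore G
    · obtain ⟨a, b, hab, ha, hb, h1, h2⟩ := isTwoCoreSet_twoCore z hzc
      exact ⟨a, b, hab, Or.inr ha, Or.inr hb, h1, h2⟩
    · have hzs : z ∈ c'.support := by
        rcases hz with hz | hz
        · exact hz
        · exact absurd hz hzc
      obtain ⟨p, q, hpq, hps, hqs, h1, h2⟩ := cycle_two_neighbors c' hc' z hzs
      exact ⟨p, q, hpq, Or.inl hps, Or.inl hqs, h1, h2⟩
  have hcore : ∀ t ∈ c'.support, t ∈ twoCore G := fun t ht =>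
    mem_twoCore_of hTcore (Or.inl ht)
  have hxall : ∀ t ∈ c'.support, t = x := by
    intro t ht
    exact (treeSet_root_or_noncore (hsup t ht)).resolve_right (fun h => h (hcore t ht))
  cases c with
  | nil => exact hc.not_of_nil
  | @cons _ u _ h p =>
    have h1 : (vv : V) ∈ c'.support := by
      rw [hc'def, Walk.support_map, List.mem_map]
      exact ⟨vv, start_mem_support _, rfl⟩
    have h2 : (u : V) ∈ c'.support := by
      rw [hc'def, Walk.support_map, List.mem_map]
      exact ⟨u, by simp [support_cons, start_mem_support], rfl⟩
    have hadj : G.Adj (vv : V) (u : V) := h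
    rw [hxall _ h1, hxall _ h2] at hadj
    exact hadj.ne rfl

lemma induce_reachable {s : Set V} : ∀ {a b : V} (w : G.Walk a b)
    (hs : ∀ z ∈ w.support, z ∈ s),
    (G.induce s).Reachable ⟨a, hs a w.start_mem_support⟩ ⟨b, hs b w.end_mem_support⟩ := by
  intro a b w
  induction w with
  | nil => intro hs; exact Reachable.refl _
  | @cons a a' b h p ih =>
    intro hs
    have ha : a ∈ s := hs a (by simp [support_cons])
    have ha' : a' ∈ s := hs a' (by simp [support_cons, start_mem_support])
    have h1 : (G.induce s).Adj ⟨a, ha⟩ ⟨a', ha'⟩ := h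
    exact (h1.reachable).trans (ih (fun z hz => hs z (by simp [support_cons, hz])))

lemma treeSet_connected : (G.induce (treeSet G x)).Connected := by
  have hne : Nonempty (treeSet G x) := ⟨⟨x, mem_treeSet_self G x⟩⟩
  rw [connected_iff]
  refine ⟨?_, hne⟩
  have hreach : ∀ v : treeSet G x,
      (G.induce (treeSet G x)).Reachable ⟨x, mem_treeSet_self G x⟩ v := by
    rintro ⟨v, hv⟩
    obtain ⟨w, hw⟩ := hv
    have hs : ∀ z ∈ w.support, z ∈ treeSet G x := fun z hz =>
      mem_treeSet_of_support w hw hz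
    exact induce_reachable w hs
  intro u v
  exact (hreach u).symm.trans (hreach v)
end tree2

section paths
variable {X : Type*} (T : SimpleGraph X) (r : X)
open SimpleGraph.Walk

noncomputable def thePath (hc : T.Connected) (v : X) : T.Path v r := by
  classical
  exact ((hc.preconnected v r).some).toPath

variable {T r}
variable (ha : T.IsAcyclic) (hc : T.Connected)
include ha

lemma path_unique {v w : X} (p q : T.Path v w) : p = q :=
  isAcyclic_iff_path_unique.mp ha p q

lemma thePath_nil : (thePath T r hc r).val = Walk.nil := by
  have : thePath T r hc r = ⟨Walk.nil, IsPath.nil⟩ := path_unique ha _ _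
  rw [this]

lemma eq_root_of_length_zero {v : X} (h : (thePath T r hc v).val.length = 0) : v = r :=
  Walk.eq_of_length_eq_zero h

lemma path_step {v v' : X} (h : T.Adj v v') :
    (thePath T r hc v).val = Walk.cons h (thePath T r hc v').val ∨
    (thePath T r hc v').val = Walk.cons h.symm (thePath T r hc v).val := by
  classical
  by_cases hv : v' ∈ (thePath T r hc v).val.support
  · left
    have hp1 : ((thePath T r hc v).val.takeUntil v' hv).IsPath :=
      (thePath T r hc v).2.takeUntil hv
    have hp2 : (Walk.cons h (Walk.nil : T.Walk v' v')).IsPath := by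
      rw [cons_isPath_iff]
      exact ⟨IsPath.nil, by simp [h.ne]⟩
    have ht : (thePath T r hc v).val.takeUntil v' hv = Walk.cons h Walk.nil :=
      congrArg Subtype.val (path_unique ha ⟨_, hp1⟩ ⟨_, hp2⟩)
    have hp3 : ((thePath T r hc v).val.dropUntil v' hv).IsPath :=
      (thePath T r hc v).2.dropUntil hv
    have hd : ((thePath T r hc v).val.dropUntil v' hv) = (thePath T r hc v').val :=
      congrArg Subtype.val (path_unique ha ⟨_, hp3⟩ (thePath T r hc v'))
    calc (thePath T r hc v).val
        = ((thePath T r hc v).val.takeUntil v' hv).append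
            ((thePath T r hc v).val.dropUntil v' hv) := (take_spec _ hv).symm
      _ = (Walk.cons h Walk.nil).append ((thePath T r hc v).val.dropUntil v' hv) := by rw [ht]
      _ = Walk.cons h ((thePath T r hc v).val.dropUntil v' hv) := by
            rw [Walk.cons_append, Walk.nil_append]
      _ = Walk.cons h (thePath T r hc v').val := by rw [hd]
  · right
    have hp : (Walk.cons h.symm (thePath T r hc v).val).IsPath := by
      rw [cons_isPath_iff]
      exact ⟨(thePath T r hc v).2, hv⟩
    exact congrArg Subtype.val (path_unique ha (thePath T r hc v') ⟨_, hp⟩)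

lemma thePath_length_root (hc : T.Connected) {v : X} (hv : v = r) :
    (thePath T r hc v).val.length = 0 := by
  subst hv
  rw [thePath_nil ha hc]
  rfl

lemma path_decomp {v : X} (hv : v ≠ r) :
    ∃ (u : X) (h : T.Adj v u), (thePath T r hc v).val = Walk.cons h (thePath T r hc u).val := by
  obtain ⟨u, h, p', hp'⟩ := exists_eq_cons_of_ne hv (thePath T r hc v).val
  have hpath := (thePath T r hc v).2
  rw [hp', cons_isPath_iff] at hpath
  have : p' = (thePath T r hc u).val :=
    congrArg Subtype.val (path_unique ha ⟨p', hpath.1⟩ (thePath T r hc u))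
  exact ⟨u, h, by rw [hp', this]⟩

lemma cons_head_eq {v u₁ u₂ : X} {h₁ : T.Adj v u₁} {h₂ : T.Adj v u₂}
    {p₁ : T.Walk u₁ r} {p₂ : T.Walk u₂ r}
    (h : Walk.cons h₁ p₁ = Walk.cons h₂ p₂) : u₁ = u₂ := by
  have hs := congrArg Walk.support h
  rw [support_cons, support_cons] at hs
  have hs' : p₁.support = p₂.support := by
    injection hs
  rw [support_eq_cons p₁, support_eq_cons p₂] at hs'
  injection hs'

end paths

section bisim
open SimpleGraph.Walk

variable {A B : Type*} {T₁ : SimpleGraph A} {T₂ : SimpleGraph B} {S : A → B → Prop}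
  {a₀ : A} {b₀ : B}

/-- Adjusted neighbourhood equivalence sending a chosen pair to each other. -/
noncomputable def adjE
    (hzig : ∀ a b a' b', S a b → S a' b → S a' b' → S a b')
    (hbis : ∀ a b, S a b → ∃ e : T₁.neighborSet a ≃ T₂.neighborSet b,
      ∀ z : T₁.neighborSet a, S z.val (e z).val)
    {a : A} {b : B} {t : A} {b' : B}
    (hS : S a b) (ht : t ∈ T₁.neighborSet a) (hb' : b' ∈ T₂.neighborSet b) (hS' : S t b') :
    {e : T₁.neighborSet a ≃ T₂.neighborSet b //
      (∀ z : T₁.neighborSet a, S z.val (e z).val) ∧ (e ⟨t, ht⟩).val = b'} := by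
  classical
  let e := (hbis a b hS).choose
  have he : ∀ z : T₁.neighborSet a, S z.val (e z).val := (hbis a b hS).choose_spec
  refine ⟨(Equiv.swap (⟨t, ht⟩ : T₁.neighborSet a) (e.symm ⟨b', hb'⟩)).trans e, ?_, ?_⟩
  · intro z
    by_cases hzt : z = ⟨t, ht⟩
    · subst hzt
      simp only [Equiv.trans_apply, Equiv.swap_apply_left, Equiv.apply_symm_apply]
      exact hS'
    by_cases hzq : z = e.symm ⟨b', hb'⟩
    · subst hzq
      simp only [Equiv.trans_apply, Equiv.swap_apply_right]
      have h1 : S (e.symm ⟨b', hb'⟩).val b' := by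
        have h2 := he (e.symm ⟨b', hb'⟩)
        rwa [Equiv.apply_symm_apply] at h2
      exact hzig _ _ _ _ h1 hS' (he ⟨t, ht⟩)
    · simp only [Equiv.trans_apply, Equiv.swap_apply_of_ne_of_ne hzt hzq]
      exact he z
  · simp only [Equiv.trans_apply, Equiv.swap_apply_left, Equiv.apply_symm_apply]

/-- Data attached to a vertex during the tree isomorphism construction. -/
structure BN (T₁ : SimpleGraph A) (T₂ : SimpleGraph B) (S : A → B → Prop) (a : A) where
  b : B
  hS : S a b
  e : T₁.neighborSet a ≃ T₂.neighborSet b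
  he : ∀ z : T₁.neighborSet a, S z.val (e z).val

variable (hzig : ∀ a b a' b', S a b → S a' b → S a' b' → S a b')
  (hbis : ∀ a b, S a b → ∃ e : T₁.neighborSet a ≃ T₂.neighborSet b,
      ∀ z : T₁.neighborSet a, S z.val (e z).val)
  (h₀ : S a₀ b₀)

noncomputable def bnodeStep {u t : A} (m : BN T₁ T₂ S t) (h : T₁.Adj u t) : BN T₁ T₂ S u :=
  ⟨(m.e ⟨u, h.symm⟩).val, m.he ⟨u, h.symm⟩,
    (adjE hzig hbis (m.he ⟨u, h.symm⟩) (show t ∈ T₁.neighborSet u from h)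
      (show m.b ∈ T₂.neighborSet (m.e ⟨u, h.symm⟩).val from
        ((m.e ⟨u, h.symm⟩).2 : T₂.Adj m.b _).symm) m.hS).val,
    (adjE hzig hbis (m.he ⟨u, h.symm⟩) (show t ∈ T₁.neighborSet u from h)
      (show m.b ∈ T₂.neighborSet (m.e ⟨u, h.symm⟩).val from
        ((m.e ⟨u, h.symm⟩).2 : T₂.Adj m.b _).symm) m.hS).2.1⟩

lemma bnodeStep_b {u t : A} (m : BN T₁ T₂ S t) (h : T₁.Adj u t) :
    (bnodeStep hzig hbis m h).b = (m.e ⟨u, h.symm⟩).val := rfl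

lemma bnodeStep_adj {u t : A} (m : BN T₁ T₂ S t) (h : T₁.Adj u t) :
    T₂.Adj m.b (bnodeStep hzig hbis m h).b := (m.e ⟨u, h.symm⟩).2

lemma bnodeStep_parent {u t : A} (m : BN T₁ T₂ S t) (h : T₁.Adj u t) :
    ((bnodeStep hzig hbis m h).e ⟨t, h⟩).val = m.b :=
  (adjE hzig hbis (m.he ⟨u, h.symm⟩) (show t ∈ T₁.neighborSet u from h)
      (show m.b ∈ T₂.neighborSet (m.e ⟨u, h.symm⟩).val from
        ((m.e ⟨u, h.symm⟩).2 : T₂.Adj m.b _).symm) m.hS).2.2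

noncomputable def bnode : ∀ (u : A) (_ : T₁.Walk u a₀), BN T₁ T₂ S u
  | _, .nil => ⟨b₀, h₀, (hbis a₀ b₀ h₀).choose, (hbis a₀ b₀ h₀).choose_spec⟩
  | u, @Walk.cons _ _ _ t _ h q => bnodeStep hzig hbis (bnode t q) h

lemma bnode_nil_b : (bnode hzig hbis h₀ a₀ Walk.nil).b = b₀ := by
  rw [bnode]

lemma bnode_cons {u t : A} (h : T₁.Adj u t) (q : T₁.Walk t a₀) :
    bnode hzig hbis h₀ u (Walk.cons h q)
      = bnodeStep hzig hbis (bnode hzig hbis h₀ t q) h := by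
  rw [bnode]

end bisim
section main
open SimpleGraph.Walk

variable {A B : Type*} {T₁ : SimpleGraph A} {T₂ : SimpleGraph B} {S : A → B → Prop}
  {a₀ : A} {b₀ : B}

variable (ha₁ : T₁.IsAcyclic) (hc₁ : T₁.Connected) (ha₂ : T₂.IsAcyclic) (hc₂ : T₂.Connected)
  (hzig : ∀ a b a' b', S a b → S a' b → S a' b' → S a b')
  (hbis : ∀ a b, S a b → ∃ e : T₁.neighborSet a ≃ T₂.neighborSet b,
      ∀ z : T₁.neighborSet a, S z.val (e z).val)
  (h₀ : S a₀ b₀)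

noncomputable def phi (v : A) : B :=
  (bnode hzig hbis h₀ v (thePath T₁ a₀ hc₁ v).val).b

lemma phi_def (v : A) :
    phi hc₁ hzig hbis h₀ v = (bnode hzig hbis h₀ v (thePath T₁ a₀ hc₁ v).val).b := rfl

include ha₁ in
lemma phi_root : phi hc₁ hzig hbis h₀ a₀ = b₀ := by
  rw [phi_def, thePath_nil ha₁ hc₁, bnode_nil_b]

lemma phi_child {v u : A} (h : T₁.Adj v u)
    (hcons : (thePath T₁ a₀ hc₁ v).val = Walk.cons h (thePath T₁ a₀ hc₁ u).val) :
    phi hc₁ hzig hbis h₀ v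
      = ((bnode hzig hbis h₀ u (thePath T₁ a₀ hc₁ u).val).e ⟨v, h.symm⟩).val := by
  rw [phi_def, hcons, bnode_cons, bnodeStep_b]

lemma phi_child_adj {v u : A} (h : T₁.Adj v u)
    (hcons : (thePath T₁ a₀ hc₁ v).val = Walk.cons h (thePath T₁ a₀ hc₁ u).val) :
    T₂.Adj (phi hc₁ hzig hbis h₀ u) (phi hc₁ hzig hbis h₀ v) := by
  rw [phi_def (v := v), hcons, bnode_cons]
  exact bnodeStep_adj hzig hbis _ h

lemma nodeAt_parent {u t : A} (h₂ : T₁.Adj u t)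
    (hcons : (thePath T₁ a₀ hc₁ u).val = Walk.cons h₂ (thePath T₁ a₀ hc₁ t).val) :
    ((bnode hzig hbis h₀ u (thePath T₁ a₀ hc₁ u).val).e ⟨t, h₂⟩).val
      = phi hc₁ hzig hbis h₀ t := by
  rw [hcons, bnode_cons, bnodeStep_parent, phi_def]

include ha₁ ha₂ in
lemma phi_main : ∀ (n : ℕ) (v : A), (thePath T₁ a₀ hc₁ v).val.length = n →
    ((thePath T₂ b₀ hc₂ (phi hc₁ hzig hbis h₀ v)).val.length = n ∧
     ∀ (u : A) (h : T₁.Adj v u),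
       (thePath T₁ a₀ hc₁ v).val = Walk.cons h (thePath T₁ a₀ hc₁ u).val →
       ∃ h' : T₂.Adj (phi hc₁ hzig hbis h₀ v) (phi hc₁ hzig hbis h₀ u),
         (thePath T₂ b₀ hc₂ (phi hc₁ hzig hbis h₀ v)).val
           = Walk.cons h' (thePath T₂ b₀ hc₂ (phi hc₁ hzig hbis h₀ u)).val) := by
  intro n
  induction n using Nat.strong_induction_on with
  | _ n ih =>
    intro v hv
    match n, hv with
    | 0, hv =>
      have hva : v = a₀ := Walk.eq_of_length_eq_zero hv
      subst hva
      constructor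
      · rw [phi_root ha₁, thePath_nil ha₂ hc₂]
        rfl
      · intro u h hcons
        rw [thePath_nil ha₁ hc₁] at hcons
        exact absurd hcons (by simp)
    | (n + 1), hv =>
      have hvne : v ≠ a₀ := by
        intro hva
        subst hva
        rw [thePath_nil ha₁ hc₁] at hv
        simp at hv
      obtain ⟨u, h, hcons⟩ := path_decomp ha₁ hc₁ hvne
      have hdepu : (thePath T₁ a₀ hc₁ u).val.length = n := by
        rw [hcons] at hv
        simpa using hv
      have ihu := ih n (Nat.lt_succ_self n) u hdepu
      have hedge : T₂.Adj (phi hc₁ hzig hbis h₀ v) (phi hc₁ hzig hbis h₀ u) :=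
        (phi_child_adj hc₁ hzig hbis h₀ h hcons).symm
      rcases path_step ha₂ hc₂ hedge with hgood | hbad
      · constructor
        · rw [hgood]
          simp [ihu.1]
        · intro u' h' hcons'
          have huu : u' = u := cons_head_eq ha₁ (hcons'.symm.trans hcons)
          subst huu
          exact ⟨hedge, hgood⟩
      · exfalso
        by_cases hua : u = a₀
        · subst hua
          have h0len := thePath_length_root ha₂ hc₂ (phi_root ha₁ hc₁ hzig hbis h₀)
          rw [hbad] at h0len
          simp at h0len
        · obtain ⟨t, h₂, hcons₂⟩ := path_decomp ha₁ hc₁ hua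
          obtain ⟨h₃, hP3⟩ := ihu.2 t h₂ hcons₂
          have hpt : phi hc₁ hzig hbis h₀ v = phi hc₁ hzig hbis h₀ t :=
            cons_head_eq ha₂ (hbad.symm.trans hP3)
          have h4 := phi_child hc₁ hzig hbis h₀ h hcons
          have h5 := nodeAt_parent hc₁ hzig hbis h₀ h₂ hcons₂
          have hvt : v ≠ t := by
            intro hveq
            have hp := (thePath T₁ a₀ hc₁ v).2
            rw [hcons, cons_isPath_iff] at hp
            apply hp.2
            rw [hcons₂]
            subst hveq
            simp [support_cons, start_mem_support]
          apply hvt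
          have h6 : ((bnode hzig hbis h₀ u (thePath T₁ a₀ hc₁ u).val).e ⟨v, h.symm⟩).val
              = ((bnode hzig hbis h₀ u (thePath T₁ a₀ hc₁ u).val).e ⟨t, h₂⟩).val := by
            rw [h4, ← h5] at hpt
            exact hpt
          have h7 := (bnode hzig hbis h₀ u (thePath T₁ a₀ hc₁ u).val).e.injective
            (Subtype.ext h6)
          exact congrArg Subtype.val h7

end main

section main2
open SimpleGraph.Walk

variable {A B : Type*} {T₁ : SimpleGraph A} {T₂ : SimpleGraph B} {S : A → B → Prop}
  {a₀ : A} {b₀ : B}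

variable (ha₁ : T₁.IsAcyclic) (hc₁ : T₁.Connected) (ha₂ : T₂.IsAcyclic) (hc₂ : T₂.Connected)
  (hzig : ∀ a b a' b', S a b → S a' b → S a' b' → S a b')
  (hbis : ∀ a b, S a b → ∃ e : T₁.neighborSet a ≃ T₂.neighborSet b,
      ∀ z : T₁.neighborSet a, S z.val (e z).val)
  (h₀ : S a₀ b₀)

lemma thePath_length_congr {X : Type*} {T : SimpleGraph X} {r : X} (hc : T.Connected)
    {v v' : X} (h : v = v') :
    (thePath T r hc v).val.length = (thePath T r hc v').val.length := by subst h; rfl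

lemma thePath_getVert_congr {X : Type*} {T : SimpleGraph X} {r : X} (hc : T.Connected)
    {v v' : X} (h : v = v') :
    (thePath T r hc v).val.getVert 1 = (thePath T r hc v').val.getVert 1 := by subst h; rfl

include ha₁ hc₁ ha₂ hc₂ hzig hbis h₀ in
lemma phi_inj : ∀ (n : ℕ) (v w : A), (thePath T₁ a₀ hc₁ v).val.length = n →
    phi hc₁ hzig hbis h₀ v = phi hc₁ hzig hbis h₀ w → v = w := by
  intro n
  induction n using Nat.strong_induction_on with
  | _ n ih =>
    intro v w hv hphi
    have hv2 := (phi_main ha₁ hc₁ ha₂ hc₂ hzig hbis h₀ n v hv).1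
    have hw : (thePath T₁ a₀ hc₁ w).val.length = n := by
      have h1 := (phi_main ha₁ hc₁ ha₂ hc₂ hzig hbis h₀ _ w rfl).1
      have h2 := thePath_length_congr (r := b₀) hc₂ hphi
      omega
    match n, hv, hw, ih with
    | 0, hv, hw, ih =>
      rw [Walk.eq_of_length_eq_zero hv, Walk.eq_of_length_eq_zero hw]
    | (n+1), hv, hw, ih =>
      have hvne : v ≠ a₀ := by
        intro hva; subst hva
        rw [thePath_length_root ha₁ hc₁ rfl] at hv; simp at hv
      have hwne : w ≠ a₀ := by
        intro hwa; subst hwa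
        rw [thePath_length_root ha₁ hc₁ rfl] at hw; simp at hw
      obtain ⟨u₁, h1, hcons1⟩ := path_decomp ha₁ hc₁ hvne
      obtain ⟨u₂, h2, hcons2⟩ := path_decomp ha₁ hc₁ hwne
      obtain ⟨e1, hP1⟩ := (phi_main ha₁ hc₁ ha₂ hc₂ hzig hbis h₀ (n+1) v hv).2 u₁ h1 hcons1
      obtain ⟨e2, hP2⟩ := (phi_main ha₁ hc₁ ha₂ hc₂ hzig hbis h₀ (n+1) w hw).2 u₂ h2 hcons2
      have hg1 : (thePath T₂ b₀ hc₂ (phi hc₁ hzig hbis h₀ v)).val.getVert 1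
          = phi hc₁ hzig hbis h₀ u₁ := by
        rw [hP1, Walk.getVert_cons_succ, Walk.getVert_zero]
      have hg2 : (thePath T₂ b₀ hc₂ (phi hc₁ hzig hbis h₀ w)).val.getVert 1
          = phi hc₁ hzig hbis h₀ u₂ := by
        rw [hP2, Walk.getVert_cons_succ, Walk.getVert_zero]
      have hu12 : phi hc₁ hzig hbis h₀ u₁ = phi hc₁ hzig hbis h₀ u₂ := by
        rw [← hg1, ← hg2]
        exact thePath_getVert_congr (r := b₀) hc₂ hphi
      have hdep1 : (thePath T₁ a₀ hc₁ u₁).val.length = n := by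
        rw [hcons1] at hv; simpa using hv
      have huu : u₁ = u₂ := ih n (Nat.lt_succ_self n) u₁ u₂ hdep1 hu12
      subst huu
      have h4 := phi_child hc₁ hzig hbis h₀ h1 hcons1
      have h5 := phi_child hc₁ hzig hbis h₀ h2 hcons2
      rw [h4, h5] at hphi
      have h7 := (bnode hzig hbis h₀ u₁ (thePath T₁ a₀ hc₁ u₁).val).e.injective
        (Subtype.ext hphi)
      exact congrArg Subtype.val h7

include ha₁ hc₁ ha₂ hc₂ hzig hbis h₀ in
lemma phi_surj : ∀ (n : ℕ) (b : B), (thePath T₂ b₀ hc₂ b).val.length = n →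
    ∃ v, phi hc₁ hzig hbis h₀ v = b := by
  intro n
  induction n using Nat.strong_induction_on with
  | _ n ih =>
    intro b hb
    match n, hb, ih with
    | 0, hb, ih =>
      exact ⟨a₀, by rw [phi_root ha₁ hc₁ hzig hbis h₀, Walk.eq_of_length_eq_zero hb]⟩
    | (n+1), hb, ih =>
      have hbne : b ≠ b₀ := by
        intro hbb; subst hbb
        rw [thePath_length_root ha₂ hc₂ rfl] at hb; simp at hb
      obtain ⟨c, h', hconsB⟩ := path_decomp ha₂ hc₂ hbne
      have hdepc : (thePath T₂ b₀ hc₂ c).val.length = n := by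
        rw [hconsB] at hb; simpa using hb
      obtain ⟨u, hu⟩ := ih n (Nat.lt_succ_self n) c hdepc
      have hub : T₂.Adj (phi hc₁ hzig hbis h₀ u) b := by rw [hu]; exact h'.symm
      set e := (bnode hzig hbis h₀ u (thePath T₁ a₀ hc₁ u).val).e with hedef
      set z := e.symm ⟨b, hub⟩ with hzdef
      have hez : (e z).val = b := by rw [hzdef, Equiv.apply_symm_apply]
      have hadj : T₁.Adj z.val u := z.2.symm
      rcases path_step ha₁ hc₁ hadj with hg | hb2
      · refine ⟨z.val, ?_⟩
        have hpc := phi_child hc₁ hzig hbis h₀ hadj hg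
        rw [hpc]
        have hz' : (⟨z.val, hadj.symm⟩ : T₁.neighborSet u) = z := Subtype.ext rfl
        rw [← hedef, hz', hez]
      · exfalso
        have hune : u ≠ a₀ := by
          intro hua; subst hua
          rw [thePath_nil ha₁ hc₁] at hb2
          simp at hb2
        obtain ⟨t, h₂, hcons₂⟩ := path_decomp ha₁ hc₁ hune
        have hzt : z.val = t := cons_head_eq ha₁ (hb2.symm.trans hcons₂)
        have hbt : b = phi hc₁ hzig hbis h₀ t := by
          rw [← hez]
          have hze : z = (⟨t, h₂⟩ : T₁.neighborSet u) := Subtype.ext hzt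
          rw [hze, hedef]
          exact nodeAt_parent hc₁ hzig hbis h₀ h₂ hcons₂
        have hlt : (thePath T₁ a₀ hc₁ u).val.length
            = (thePath T₁ a₀ hc₁ t).val.length + 1 := by
          rw [hcons₂]; rfl
        have hut : (thePath T₁ a₀ hc₁ u).val.length = n := by
          have hm := (phi_main ha₁ hc₁ ha₂ hc₂ hzig hbis h₀ _ u rfl).1
          have hcc := thePath_length_congr (r := b₀) hc₂ hu
          omega
        have hdt := (phi_main ha₁ hc₁ ha₂ hc₂ hzig hbis h₀ _ t rfl).1
        have hbb := thePath_length_congr (r := b₀) hc₂ hbt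
        omega

include ha₁ hc₁ ha₂ hc₂ hzig hbis h₀ in
lemma phi_adj {v w : A} (hvw : T₁.Adj v w) :
    T₂.Adj (phi hc₁ hzig hbis h₀ v) (phi hc₁ hzig hbis h₀ w) := by
  rcases path_step ha₁ hc₁ hvw with hg | hg
  · exact (phi_child_adj hc₁ hzig hbis h₀ hvw hg).symm
  · exact phi_child_adj hc₁ hzig hbis h₀ hvw.symm hg

include ha₁ hc₁ ha₂ hc₂ hzig hbis h₀ in
lemma phi_adj_rev {v w : A}
    (h2 : T₂.Adj (phi hc₁ hzig hbis h₀ v) (phi hc₁ hzig hbis h₀ w)) : T₁.Adj v w := by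
  rcases path_step (r := b₀) ha₂ hc₂ h2 with hg | hg
  · have hvne : v ≠ a₀ := by
      intro hva; subst hva
      have h0 := thePath_length_root ha₂ hc₂ (phi_root ha₁ hc₁ hzig hbis h₀)
      rw [hg] at h0; simp at h0
    obtain ⟨u, h, hcons⟩ := path_decomp ha₁ hc₁ hvne
    obtain ⟨h', hP⟩ := (phi_main ha₁ hc₁ ha₂ hc₂ hzig hbis h₀ _ v rfl).2 u h hcons
    have hwu : phi hc₁ hzig hbis h₀ w = phi hc₁ hzig hbis h₀ u := by
      have g1 : (thePath T₂ b₀ hc₂ (phi hc₁ hzig hbis h₀ v)).val.getVert 1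
          = phi hc₁ hzig hbis h₀ w := by
        rw [hg, Walk.getVert_cons_succ, Walk.getVert_zero]
      have g2 : (thePath T₂ b₀ hc₂ (phi hc₁ hzig hbis h₀ v)).val.getVert 1
          = phi hc₁ hzig hbis h₀ u := by
        rw [hP, Walk.getVert_cons_succ, Walk.getVert_zero]
      rw [← g1, g2]
    have huw : w = u := phi_inj ha₁ hc₁ ha₂ hc₂ hzig hbis h₀ _ w u rfl hwu
    rw [huw]
    exact h
  · have hwne : w ≠ a₀ := by
      intro hwa; subst hwa
      have h0 := thePath_length_root ha₂ hc₂ (phi_root ha₁ hc₁ hzig hbis h₀)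
      rw [hg] at h0; simp at h0
    obtain ⟨u, h, hcons⟩ := path_decomp ha₁ hc₁ hwne
    obtain ⟨h', hP⟩ := (phi_main ha₁ hc₁ ha₂ hc₂ hzig hbis h₀ _ w rfl).2 u h hcons
    have hvu : phi hc₁ hzig hbis h₀ v = phi hc₁ hzig hbis h₀ u := by
      have g1 : (thePath T₂ b₀ hc₂ (phi hc₁ hzig hbis h₀ w)).val.getVert 1
          = phi hc₁ hzig hbis h₀ v := by
        rw [hg, Walk.getVert_cons_succ, Walk.getVert_zero]
      have g2 : (thePath T₂ b₀ hc₂ (phi hc₁ hzig hbis h₀ w)).val.getVert 1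
          = phi hc₁ hzig hbis h₀ u := by
        rw [hP, Walk.getVert_cons_succ, Walk.getVert_zero]
      rw [← g1, g2]
    have huv : v = u := phi_inj ha₁ hc₁ ha₂ hc₂ hzig hbis h₀ _ v u rfl hvu
    rw [huv]
    exact h.symm

include ha₁ hc₁ ha₂ hc₂ hzig hbis h₀ in
theorem tree_bisim_iso : ∃ φ : T₁ ≃g T₂, φ a₀ = b₀ := by
  have hbij : Function.Bijective (phi hc₁ hzig hbis h₀) := by
    constructor
    · intro v w hvw
      exact phi_inj ha₁ hc₁ ha₂ hc₂ hzig hbis h₀ _ v w rfl hvw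
    · intro b
      exact phi_surj ha₁ hc₁ ha₂ hc₂ hzig hbis h₀ _ b rfl
  refine ⟨⟨Equiv.ofBijective _ hbij, ?_⟩, ?_⟩
  · intro v w
    constructor
    · exact phi_adj_rev ha₁ hc₁ ha₂ hc₂ hzig hbis h₀
    · exact phi_adj ha₁ hc₁ ha₂ hc₂ hzig hbis h₀
  · exact phi_root ha₁ hc₁ hzig hbis h₀

end main2

section assembly
open SimpleGraph.Walk

variable {V W : Type*} {G : SimpleGraph V} {H : SimpleGraph W} {x : V} {y : W}

def induceNbhd (G : SimpleGraph V) (s : Set V) (a : s) :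
    (G.induce s).neighborSet a ≃ {z : G.neighborSet (a : V) // (z : V) ∈ s} where
  toFun w := ⟨⟨w.val.val, w.prop⟩, w.val.prop⟩
  invFun z := ⟨⟨z.val.val, z.prop⟩, z.val.prop⟩
  left_inv w := by apply Subtype.ext; apply Subtype.ext; rfl
  right_inv z := by apply Subtype.ext; apply Subtype.ext; rfl

lemma tree_nbhd_char [Finite V] [Finite W] (hx : x ∈ twoCore G) (hy : y ∈ twoCore H)
    {v : V} {v' : W} (hv : v ∈ treeSet G x) (hv' : v' ∈ treeSet H y)
    (hroot : v = x ↔ v' = y)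
    (e : G.neighborSet v ≃ H.neighborSet v') (he : ∀ z, crR G H z.val (e z).val) :
    ∀ z : G.neighborSet v, ((z : V) ∈ treeSet G x ↔ ((e z : H.neighborSet v') : W) ∈ treeSet H y) ∧
      ((z : V) ∈ treeSet G x → ((z : V) = x ↔ ((e z : H.neighborSet v') : W) = y)) := by
  intro z
  have hzadj : G.Adj v (z : V) := z.2
  have hwadj : H.Adj v' ((e z : H.neighborSet v') : W) := (e z).2
  have hzw := he z
  constructor
  · constructor
    · intro hzt
      by_cases hzx : (z : V) = x
      · have hvx : v ≠ x := by
          intro hvx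
          exact hzadj.ne (hvx.trans hzx.symm)
        have hv'y : v' ≠ y := fun h => hvx (hroot.mpr h)
        have hv'nc : v' ∉ twoCore H := (treeSet_root_or_noncore hv').resolve_left hv'y
        have hwcore : ((e z : H.neighborSet v') : W) ∈ twoCore H :=
          crR_mem_twoCore hzw (hzx ▸ hx)
        have := core_neighbor_eq_root hy hv' hv'y hwcore hwadj
        rw [this]
        exact mem_treeSet_self H y
      · have hznc : (z : V) ∉ twoCore G := (treeSet_root_or_noncore hzt).resolve_left hzx
        have hwnc : ((e z : H.neighborSet v') : W) ∉ twoCore H := by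
          intro hw
          exact hznc ((crR_twoCore_iff hzw).mpr hw)
        exact treeSet_extend hv' hwnc hwadj
    · intro hwt
      by_cases hwy : ((e z : H.neighborSet v') : W) = y
      · have hv'y : v' ≠ y := by
          intro hv'y
          exact hwadj.ne (hv'y.trans hwy.symm)
        have hvx : v ≠ x := fun h => hv'y (hroot.mp h)
        have hzcore : (z : V) ∈ twoCore G := (crR_twoCore_iff hzw).mpr (hwy ▸ hy)
        have := core_neighbor_eq_root hx hv hvx hzcore hzadj
        rw [this]
        exact mem_treeSet_self G x
      · have hwnc : ((e z : H.neighborSet v') : W) ∉ twoCore H :=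
          (treeSet_root_or_noncore hwt).resolve_left hwy
        have hznc : (z : V) ∉ twoCore G := by
          intro hz
          exact hwnc ((crR_twoCore_iff hzw).mp hz)
        exact treeSet_extend hv hznc hzadj
  · intro hzt
    constructor
    · intro hzx
      have hvx : v ≠ x := by
        intro hvx
        exact hzadj.ne (hvx.trans hzx.symm)
      have hv'y : v' ≠ y := fun h => hvx (hroot.mpr h)
      have hwcore : ((e z : H.neighborSet v') : W) ∈ twoCore H :=
        crR_mem_twoCore hzw (hzx ▸ hx)
      exact core_neighbor_eq_root hy hv' hv'y hwcore hwadj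
    · intro hwy
      have hv'y : v' ≠ y := by
        intro hv'y
        exact hwadj.ne (hv'y.trans hwy.symm)
      have hvx : v ≠ x := fun h => hv'y (hroot.mp h)
      have hzcore : (z : V) ∈ twoCore G := (crR_twoCore_iff hzw).mpr (hwy ▸ hy)
      exact core_neighbor_eq_root hx hv hvx hzcore hzadj

end assembly

/-- If `x` is in the 2-core of `G`, `y` is in the 2-core of `H`, and the rooted trees `T_x`
and `T_y` hanging at them are non-isomorphic, then colour refinement (run jointly on `G`
and `H`) assigns `x` and `y` different stable colours. -/
theorem pendant_tree_distinguishes {V W : Type} [Fintype V] [Fintype W]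
    (G : SimpleGraph V) (H : SimpleGraph W) (x : V) (y : W)
    (hx : x ∈ twoCore G) (hy : y ∈ twoCore H) (h : ¬ RootedTreeIso G x H y) :
    ¬ ∀ i : ℕ, crStep G H i x y := by
  intro hall
  apply h
  set T₁ := G.induce (treeSet G x) with hT₁
  set T₂ := H.induce (treeSet H y) with hT₂
  set S : (treeSet G x) → (treeSet H y) → Prop :=
    fun a b => crR G H a.val b.val ∧ (a.val = x ↔ b.val = y) with hS
  have hzig : ∀ a b a' b', S a b → S a' b → S a' b' → S a b' := by
    rintro a b a' b' ⟨h1, i1⟩ ⟨h2, i2⟩ ⟨h3, i3⟩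
    exact ⟨crR_zigzag h1 h2 h3, by tauto⟩
  have hbis : ∀ a b, S a b → ∃ e : T₁.neighborSet a ≃ T₂.neighborSet b,
      ∀ z : T₁.neighborSet a, S z.val (e z).val := by
    rintro a b ⟨hR, hroot⟩
    obtain ⟨e, he⟩ := crR_bisim G H hR
    have char := tree_nbhd_char hx hy a.2 b.2 hroot e he
    refine ⟨(induceNbhd G (treeSet G x) a).trans
      ((e.subtypeEquiv (fun z => (char z).1)).trans (induceNbhd H (treeSet H y) b).symm), ?_⟩
    intro z
    constructor
    · exact he ⟨z.val.val, z.prop⟩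
    · exact (char ⟨z.val.val, z.prop⟩).2 z.val.2
  have h₀ : S ⟨x, mem_treeSet_self G x⟩ ⟨y, mem_treeSet_self H y⟩ :=
    ⟨hall, by simp⟩
  obtain ⟨φ, hφ⟩ := tree_bisim_iso (treeSet_acyclic hx) treeSet_connected
    (treeSet_acyclic hy) treeSet_connected hzig hbis h₀
  exact ⟨φ, hφ⟩
end

section
/- Let G and H be graphs (possibly equal), u a vertex of G and v a vertex of H. If u and v receive the same stable color under color refinement run jointly on G and H, then u belongs to the 2-core of G if and only if v belongs to the 2-core of H. -/
open SimpleGraph Filter MeasureTheory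

/-- Iterated peeling: at each step keep vertices with at least two distinct
neighbours surviving the previous step. -/
def peel {V : Type*} (G : SimpleGraph V) : ℕ → Set V
  | 0 => Set.univ
  | n + 1 => {v | ∃ a b, a ≠ b ∧ a ∈ peel G n ∧ b ∈ peel G n ∧ G.Adj v a ∧ G.Adj v b}

lemma peel_antitone {V : Type*} (G : SimpleGraph V) (n : ℕ) :
    peel G (n + 1) ⊆ peel G n := by
  induction n with
  | zero => intro v _; trivial
  | succ n ih =>
      rintro v ⟨a, b, hab, ha, hb, h1, h2⟩
      exact ⟨a, b, hab, ih ha, ih hb, h1, h2⟩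

lemma twoCoreSet_subset_peel {V : Type*} (G : SimpleGraph V) {S : Set V}
    (hS : IsTwoCoreSet G S) (n : ℕ) : S ⊆ peel G n := by
  induction n with
  | zero => intro v _; trivial
  | succ n ih =>
      intro x hx
      obtain ⟨a, b, hab, ha, hb, h1, h2⟩ := hS x hx
      exact ⟨a, b, hab, ih ha, ih hb, h1, h2⟩

lemma twoCore_subset_peel {V : Type*} (G : SimpleGraph V) (n : ℕ) :
    twoCore G ⊆ peel G n := by
  rintro v ⟨S, hS, hv⟩
  exact twoCoreSet_subset_peel G hS n hv

lemma peel_stab_eq {V : Type*} (G : SimpleGraph V) {N : ℕ}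
    (h : peel G (N + 1) = peel G N) : ∀ m, N ≤ m → peel G m = peel G N := by
  intro m hm
  induction m with
  | zero => rw [Nat.le_zero.mp hm]
  | succ m ih =>
      rcases Nat.lt_or_ge N (m + 1) with hlt | hge
      · have hm' : N ≤ m := by omega
        have := ih hm'
        calc peel G (m + 1) = {v | ∃ a b, a ≠ b ∧ a ∈ peel G m ∧ b ∈ peel G m ∧
              G.Adj v a ∧ G.Adj v b} := rfl
          _ = peel G (N + 1) := by rw [this]; rfl
          _ = peel G N := h
      · rw [le_antisymm hm hge]

lemma exists_peel_stab {V : Type*} [Fintype V] (G : SimpleGraph V) :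
    ∃ N, peel G (N + 1) = peel G N := by
  by_contra hc
  push_neg at hc
  have hlt : ∀ n, (peel G (n + 1)).ncard < (peel G n).ncard := by
    intro n
    exact Set.ncard_lt_ncard (ssubset_of_subset_of_ne (peel_antitone G n) (hc n))
      (Set.toFinite _)
  have key : ∀ n, (peel G n).ncard + n ≤ (peel G 0).ncard := by
    intro n
    induction n with
    | zero => omega
    | succ n ih => have := hlt n; omega
  have := key ((peel G 0).ncard + 1)
  omega

lemma twoCore_eq_peel {V : Type*} [Fintype V] (G : SimpleGraph V) :
    ∃ N, ∀ m, N ≤ m → twoCore G = peel G m := by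
  obtain ⟨N, hN⟩ := exists_peel_stab G
  refine ⟨N, fun m hm => ?_⟩
  rw [peel_stab_eq G hN m hm]
  apply Set.Subset.antisymm (twoCore_subset_peel G N)
  intro x hx
  refine Set.mem_sUnion.mpr ⟨peel G N, ?_, hx⟩
  intro y hy
  have hy' : y ∈ peel G (N + 1) := hN ▸ hy
  exact hy'

lemma crStep_peel_iff {V W : Type*} (G : SimpleGraph V) (H : SimpleGraph W) :
    ∀ (i : ℕ) (u : V) (v : W), crStep G H i u v → (u ∈ peel G i ↔ v ∈ peel H i) := by
  intro i
  induction i with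
  | zero => intro u v _; simp [peel]
  | succ i ih =>
      rintro u v ⟨-, e, he⟩
      constructor
      · rintro ⟨a, b, hab, ha, hb, h1, h2⟩
        have ha' : a ∈ G.neighborSet u := h1
        have hb' : b ∈ G.neighborSet u := h2
        refine ⟨e ⟨a, ha'⟩, e ⟨b, hb'⟩, ?_, ?_, ?_, ?_, ?_⟩
        · intro heq
          exact hab (congrArg Subtype.val (e.injective (Subtype.ext heq)))
        · exact (ih a _ (he ⟨a, ha'⟩)).mp ha
        · exact (ih b _ (he ⟨b, hb'⟩)).mp hb
        · exact (e ⟨a, ha'⟩).2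
        · exact (e ⟨b, hb'⟩).2
      · rintro ⟨a, b, hab, ha, hb, h1, h2⟩
        have ha' : a ∈ H.neighborSet v := h1
        have hb' : b ∈ H.neighborSet v := h2
        refine ⟨e.symm ⟨a, ha'⟩, e.symm ⟨b, hb'⟩, ?_, ?_, ?_, ?_, ?_⟩
        · intro heq
          exact hab (congrArg Subtype.val (e.symm.injective (Subtype.ext heq)))
        · have := he (e.symm ⟨a, ha'⟩)
          rw [e.apply_symm_apply] at this
          exact (ih _ a this).mpr ha
        · have := he (e.symm ⟨b, hb'⟩)
          rw [e.apply_symm_apply] at this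
          exact (ih _ b this).mpr hb
        · exact (e.symm ⟨a, ha'⟩).2
        · exact (e.symm ⟨b, hb'⟩).2

/-- If `u ∈ G` and `v ∈ H` receive the same stable colour under colour refinement run
jointly on `G` and `H`, then `u` belongs to the 2-core of `G` iff `v` belongs to the
2-core of `H`. -/
theorem crStable_core_iff {V W : Type} [Fintype V] [Fintype W]
    (G : SimpleGraph V) (H : SimpleGraph W) (u : V) (v : W)
    (h : ∀ i : ℕ, crStep G H i u v) :
    u ∈ twoCore G ↔ v ∈ twoCore H := by
  obtain ⟨NG, hNG⟩ := twoCore_eq_peel G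
  obtain ⟨NH, hNH⟩ := twoCore_eq_peel H
  set N := max NG NH
  rw [hNG N (le_max_left _ _), hNH N (le_max_right _ _)]
  exact crStep_peel_iff G H N u v (h N)
end

section
/- Let G be a graph and let v_1, v_2 be vertices of G such that for some radius r the balls of radius r around v_1 and v_2 induce trees that are non-isomorphic as rooted trees (rooted at v_1 and v_2 respectively). Then color refinement assigns different stable colors to v_1 and v_2. -/
open SimpleGraph Filter MeasureTheory

/-- The ball of radius `r` around `v` in `G`. -/
def gball {V : Type*} (G : SimpleGraph V) (v : V) (r : ℕ) : Set V :=
  {u | ∃ w : G.Walk v u, w.length ≤ r}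

lemma mem_gball_self {V : Type*} (G : SimpleGraph V) (v : V) (r : ℕ) : v ∈ gball G v r :=
  ⟨SimpleGraph.Walk.nil, by simp⟩


namespace CRAux

variable {V : Type} (G : SimpleGraph V)

lemma crStep_of_le : ∀ {j i : ℕ}, i ≤ j → ∀ {u v : V}, crStep G G j u v → crStep G G i u v := by
  intro j
  induction j with
  | zero => intro i hij u v h; cases Nat.le_zero.mp hij; exact h
  | succ j ih =>
    intro i hij u v h
    rcases Nat.eq_or_lt_of_le hij with rfl | h'
    · exact h
    · exact ih (Nat.lt_succ_iff.mp h') h.1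

lemma crStep_refl : ∀ (i : ℕ) (u : V), crStep G G i u u
  | 0, _ => trivial
  | i + 1, u => ⟨crStep_refl i u, Equiv.refl _, fun x => crStep_refl i x⟩

lemma crStep_symm : ∀ (i : ℕ) {u v : V}, crStep G G i u v → crStep G G i v u
  | 0, _, _, _ => trivial
  | i + 1, u, v, ⟨h1, e, he⟩ =>
    ⟨crStep_symm i h1, e.symm, fun y => by
      have h2 := he (e.symm y)
      rw [Equiv.apply_symm_apply] at h2
      exact crStep_symm i h2⟩

lemma crStep_trans : ∀ (i : ℕ) {u v w : V}, crStep G G i u v → crStep G G i v w →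
    crStep G G i u w
  | 0, _, _, _, _, _ => trivial
  | i + 1, u, v, w, ⟨h1, e, he⟩, ⟨h1', e', he'⟩ =>
    ⟨crStep_trans i h1 h1', e.trans e', fun x => crStep_trans i (he x) (he' (e x))⟩

/-- Stable colour equality. -/
def Rrel (u v : V) : Prop := ∀ i, crStep G G i u v

lemma Rrel.symm {G : SimpleGraph V} {u v : V} (h : Rrel G u v) : Rrel G v u :=
  fun i => crStep_symm G i (h i)

lemma Rrel.trans {G : SimpleGraph V} {u v w : V} (h : Rrel G u v) (h' : Rrel G v w) :
    Rrel G u w := fun i => crStep_trans G i (h i) (h' i)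

variable [Fintype V]

lemma exists_stab : ∃ N, ∀ u v : V, crStep G G N u v → Rrel G u v := by
  classical
  set S : ℕ → Set (V × V) := fun i => {p | crStep G G i p.1 p.2} with hS
  set c : ℕ → ℕ := fun i => (S i).ncard with hc
  have hmem : sInf (Set.range c) ∈ Set.range c := Nat.sInf_mem ⟨c 0, 0, rfl⟩
  obtain ⟨N, hN⟩ := hmem
  refine ⟨N, fun u v h i => ?_⟩
  rcases le_or_gt i N with hi | hi
  · exact crStep_of_le G hi h
  · have hsub : S i ⊆ S N := fun p hp => crStep_of_le G hi.le hp
    have hcard : (S N).ncard ≤ (S i).ncard := by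
      have : sInf (Set.range c) ≤ c i := Nat.sInf_le (Set.mem_range_self i)
      show c N ≤ c i
      rw [hN]; exact this
    have heq : S i = S N := Set.eq_of_subset_of_ncard_le hsub hcard (Set.toFinite _)
    have : (u, v) ∈ S i := heq ▸ h
    exact this

lemma exists_equiv {u v : V} (hR : Rrel G u v) :
    ∃ e : (G.neighborSet u) ≃ (G.neighborSet v), ∀ x : G.neighborSet u, Rrel G (x : V) ((e x : V)) := by
  obtain ⟨N, hN⟩ := exists_stab G
  obtain ⟨-, e, he⟩ := hR (N + 1)
  exact ⟨e, fun x => hN _ _ (he x)⟩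

lemma exists_equiv_pin {u v p p' : V} (hR : Rrel G u v) (hp : G.Adj u p) (hp' : G.Adj v p')
    (hpp : Rrel G p p') :
    ∃ e : (G.neighborSet u) ≃ (G.neighborSet v),
      ((e ⟨p, hp⟩ : V) = p') ∧ ∀ x : G.neighborSet u, Rrel G (x : V) ((e x : V)) := by
  classical
  obtain ⟨e, he⟩ := exists_equiv G hR
  set a : G.neighborSet v := e ⟨p, hp⟩ with ha
  set b : G.neighborSet v := ⟨p', hp'⟩ with hb
  refine ⟨e.trans (Equiv.swap a b), by simp [ha, hb], fun x => ?_⟩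
  simp only [Equiv.trans_apply]
  rcases eq_or_ne (e x) a with h1 | h1
  · have hx : x = ⟨p, hp⟩ := e.injective (h1.trans ha)
    rw [h1, Equiv.swap_apply_left]
    subst hx; exact hpp
  · rcases eq_or_ne (e x) b with h2 | h2
    · rw [h2, Equiv.swap_apply_right]
      have h3 : Rrel G (x : V) p' := by have := he x; rwa [h2] at this
      exact (h3.trans hpp.symm).trans (he ⟨p, hp⟩)
    · rw [Equiv.swap_apply_of_ne_of_ne h1 h2]
      exact he x



open SimpleGraph Walk
open scoped Classical

/-- Lift a walk whose support lies in `s` to the induced subgraph. -/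
lemma exists_lift {s : Set V} :
    ∀ {a b : V} (w : G.Walk a b), (∀ z ∈ w.support, z ∈ s) → ∀ (ha : a ∈ s) (hb : b ∈ s),
      ∃ W : (G.induce s).Walk ⟨a, ha⟩ ⟨b, hb⟩, W.length = w.length := by
  intro a b w
  induction w with
  | nil => exact fun _ _ _ => ⟨Walk.nil, rfl⟩
  | @cons a c b h p ih =>
    intro hw ha hb
    have hc : c ∈ s := hw c (by simp)
    obtain ⟨W, hW⟩ := ih (fun z hz => hw z (by simp [hz])) hc hb
    exact ⟨Walk.cons (by simpa using h) W, by simp [hW]⟩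

/-- The homomorphism from an induced subgraph back to the ambient graph. -/
def homDown (s : Set V) : G.induce s →g G := ⟨Subtype.val, fun {a b} h => by simpa using h⟩

variable (v : V) (r : ℕ) (hT : (G.induce (gball G v r)).IsTree)

/-- The root of the ball, as a vertex of the induced subgraph. -/
def rt : ↥(gball G v r) := ⟨v, mem_gball_self G v r⟩

/-- The unique path from the root to `x` in the tree induced on the ball. -/
noncomputable def pth (x : ↥(gball G v r)) : (G.induce (gball G v r)).Walk (rt G v r) x :=
  (hT.existsUnique_path (rt G v r) x).exists.choose

lemma pth_isPath (x : ↥(gball G v r)) : (pth G v r hT x).IsPath :=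
  (hT.existsUnique_path (rt G v r) x).exists.choose_spec

lemma pth_unique {x : ↥(gball G v r)} (w : (G.induce (gball G v r)).Walk (rt G v r) x)
    (hw : w.IsPath) : w = pth G v r hT x :=
  (hT.existsUnique_path (rt G v r) x).unique hw (pth_isPath G v r hT x)

/-- Level of a vertex: distance from the root in the tree. -/
noncomputable def LV (x : V) : ℕ :=
  if h : x ∈ gball G v r then (pth G v r hT ⟨x, h⟩).length else 0

lemma LV_mem {x : V} (h : x ∈ gball G v r) : LV G v r hT x = (pth G v r hT ⟨x, h⟩).length :=
  dif_pos h

lemma LV_root : LV G v r hT v = 0 := by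
  rw [LV_mem G v r hT (mem_gball_self G v r)]
  have : (Walk.nil : (G.induce (gball G v r)).Walk (rt G v r) (rt G v r)) = pth G v r hT (rt G v r) :=
    pth_unique G v r hT _ IsPath.nil
  exact (congrArg Walk.length this).symm

lemma LV_eq_zero {x : V} (hx : x ∈ gball G v r) (h : LV G v r hT x = 0) : x = v := by
  rw [LV_mem G v r hT hx] at h
  have := Walk.eq_of_length_eq_zero h
  exact congrArg Subtype.val this.symm

lemma LV_le {x : V} (hx : x ∈ gball G v r) : LV G v r hT x ≤ r := by
  obtain ⟨w, hw⟩ := id hx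
  have hsupp : ∀ z ∈ w.support, z ∈ gball G v r := fun z hz =>
    ⟨w.takeUntil z hz, (Walk.length_takeUntil_le w hz).trans hw⟩
  obtain ⟨W, hW⟩ := exists_lift G w hsupp (mem_gball_self G v r) hx
  have hbp : W.bypass = pth G v r hT ⟨x, hx⟩ := pth_unique G v r hT _ (Walk.bypass_isPath W)
  rw [LV_mem G v r hT hx, ← hbp]
  exact (Walk.length_bypass_le W).trans (hW ▸ hw)

/-- `Child p x`: `x` is a child of `p` in the tree on the ball rooted at `v`. -/
def Child (p x : V) : Prop :=
  ∃ (hp : p ∈ gball G v r) (hx : x ∈ gball G v r)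
    (h : (G.induce (gball G v r)).Adj ⟨p, hp⟩ ⟨x, hx⟩),
    pth G v r hT ⟨x, hx⟩ = (pth G v r hT ⟨p, hp⟩).concat h

lemma Child.mem_left {p x : V} (h : Child G v r hT p x) : p ∈ gball G v r := h.choose

lemma Child.mem_right {p x : V} (h : Child G v r hT p x) : x ∈ gball G v r := h.choose_spec.choose

lemma Child.adj {p x : V} (h : Child G v r hT p x) : G.Adj p x := by
  obtain ⟨hp, hx, ha, -⟩ := h
  simpa using ha

lemma Child.lvl {p x : V} (h : Child G v r hT p x) :
    LV G v r hT x = LV G v r hT p + 1 := by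
  obtain ⟨hp, hx, ha, heq⟩ := h
  rw [LV_mem G v r hT hx, LV_mem G v r hT hp, heq, Walk.length_concat]

lemma Child.unique {p q x : V} (h : Child G v r hT p x) (h' : Child G v r hT q x) : p = q := by
  obtain ⟨hp, hx, ha, heq⟩ := h
  obtain ⟨hq, hx', ha', heq'⟩ := h'
  have : (pth G v r hT ⟨p, hp⟩).concat ha = (pth G v r hT ⟨q, hq⟩).concat ha' := by
    rw [← heq]; exact heq'
  obtain ⟨hv, -⟩ := Walk.concat_inj this
  exact congrArg Subtype.val hv

lemma exists_parent {x : V} (hx : x ∈ gball G v r) (hne : x ≠ v) :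
    ∃ p, Child G v r hT p x := by
  set P := pth G v r hT ⟨x, hx⟩ with hP
  have hlen : P.length ≠ 0 := by
    intro h0
    exact hne (LV_eq_zero G v r hT hx (by rw [LV_mem G v r hT hx, ← hP]; exact h0))
  have hnil : ¬ P.reverse.Nil := by
    rw [Walk.nil_iff_length_eq]
    simpa using hlen
  obtain ⟨y, hadj, q, hq⟩ := Walk.not_nil_iff.mp hnil
  have hPdec : P = q.reverse.concat hadj.symm := by
    have := congrArg Walk.reverse hq
    rwa [Walk.reverse_reverse, Walk.reverse_cons] at this
  have hqpath : q.reverse.IsPath := by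
    have hPp : P.IsPath := pth_isPath G v r hT _
    rw [hPdec, Walk.concat_eq_append] at hPp
    exact hPp.of_append_left
  refine ⟨(y : V), y.2, hx, by simpa using hadj.symm, ?_⟩
  have hq' : q.reverse = pth G v r hT y := pth_unique G v r hT _ hqpath
  show pth G v r hT ⟨x, hx⟩ = _
  rw [← hP, hPdec, hq']

lemma adj_classify {x y : V} (hx : x ∈ gball G v r) (hy : y ∈ gball G v r)
    (ha : (G.induce (gball G v r)).Adj ⟨x, hx⟩ ⟨y, hy⟩) :
    Child G v r hT x y ∨ Child G v r hT y x := by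
  set p := pth G v r hT ⟨x, hx⟩ with hp
  by_cases hmem : (⟨y, hy⟩ : ↥(gball G v r)) ∈ p.support
  · right
    have hpp : p.IsPath := pth_isPath G v r hT _
    have ht : (p.takeUntil _ hmem).IsPath := hpp.takeUntil hmem
    have hd : (p.dropUntil _ hmem).IsPath := hpp.dropUntil hmem
    have hone : (Walk.cons ha.symm Walk.nil : (G.induce (gball G v r)).Walk ⟨y, hy⟩ ⟨x, hx⟩).IsPath := by
      simp [Walk.isPath_def, ha.ne']
    have huniq : ∀ w : (G.induce (gball G v r)).Walk ⟨y, hy⟩ ⟨x, hx⟩, w.IsPath →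
        ∀ w' : (G.induce (gball G v r)).Walk ⟨y, hy⟩ ⟨x, hx⟩, w'.IsPath → w = w' := by
      intro w h1 w' h2
      exact ((hT.existsUnique_path _ _).unique h1 h2)
    have hdrop : p.dropUntil _ hmem = Walk.cons ha.symm Walk.nil := huniq _ hd _ hone
    refine ⟨hy, hx, ha.symm, ?_⟩
    have htake : p.takeUntil _ hmem = pth G v r hT ⟨y, hy⟩ := pth_unique G v r hT _ ht
    rw [← htake]
    have := p.take_spec hmem
    rw [hdrop] at this
    rw [Walk.concat_eq_append, this, hp]
  · left
    have hcp : (p.concat ha).IsPath := by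
      rw [← Walk.isPath_reverse_iff, Walk.reverse_concat]
      refine IsPath.cons ((Walk.isPath_reverse_iff p).mpr (pth_isPath G v r hT _)) ?_
      rw [Walk.support_reverse]
      simpa using hmem
    exact ⟨hx, hy, ha, (pth_unique G v r hT _ hcp).symm⟩

lemma nbhd_classify {u w : V} (hu : u ∈ gball G v r) (hlt : LV G v r hT u < r)
    (ha : G.Adj u w) :
    ∃ hw : w ∈ gball G v r, Child G v r hT u w ∨ Child G v r hT w u := by
  have hw : w ∈ gball G v r := by
    refine ⟨((pth G v r hT ⟨u, hu⟩).map (homDown G (gball G v r))).concat ha, ?_⟩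
    refine (le_of_eq (Walk.length_concat _ _)).trans ?_
    refine (le_of_eq (congrArg (· + 1) (Walk.length_map _ _))).trans ?_
    rw [LV_mem G v r hT hu] at hlt
    omega
  refine ⟨hw, adj_classify G v r hT hu hw (by simpa using ha)⟩

lemma Child.not_root {p : V} (h : Child G v r hT p v) : False := by
  have := h.lvl
  rw [LV_root] at this
  omega

/-- The parent function. -/
noncomputable def par (x : V) : V :=
  if h : x ∈ gball G v r ∧ x ≠ v then Classical.choose (exists_parent G v r hT h.1 h.2) else x

lemma par_spec {x : V} (hx : x ∈ gball G v r) (hne : x ≠ v) :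
    Child G v r hT (par G v r hT x) x := by
  rw [par, dif_pos ⟨hx, hne⟩]
  exact Classical.choose_spec (exists_parent G v r hT hx hne)

lemma eq_par {p x : V} (h : Child G v r hT p x) : p = par G v r hT x := by
  have hne : x ≠ v := fun he => (he ▸ h).not_root G v r hT
  exact Child.unique G v r hT h (par_spec G v r hT (h.mem_right G v r hT) hne)


/-- The heart of the argument: if stable colours of `v₁` and `v₂` agree and both balls
induce trees, the two balls are isomorphic as rooted trees. -/
lemma rooted_iso {V : Type} [Fintype V] (G : SimpleGraph V) (v₁ v₂ : V) (r : ℕ)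
    (h1 : (G.induce (gball G v₁ r)).IsTree) (h2 : (G.induce (gball G v₂ r)).IsTree)
    (hR : Rrel G v₁ v₂) :
    ∃ φ : (G.induce (gball G v₁ r)) ≃g (G.induce (gball G v₂ r)),
      φ ⟨v₁, mem_gball_self G v₁ r⟩ = ⟨v₂, mem_gball_self G v₂ r⟩ := by
  classical
  have main : ∀ d : ℕ, ∃ f : V → V, f v₁ = v₂ ∧
      (∀ x, x ∈ gball G v₁ r → LV G v₁ r h1 x ≤ d →
        f x ∈ gball G v₂ r ∧ LV G v₂ r h2 (f x) = LV G v₁ r h1 x ∧ Rrel G x (f x)) ∧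
      (∀ x y, x ∈ gball G v₁ r → y ∈ gball G v₁ r → LV G v₁ r h1 x ≤ d →
        LV G v₁ r h1 y ≤ d → f x = f y → x = y) ∧
      (∀ y, y ∈ gball G v₂ r → LV G v₂ r h2 y ≤ d →
        ∃ x, x ∈ gball G v₁ r ∧ LV G v₁ r h1 x ≤ d ∧ f x = y) ∧
      (∀ p x, Child G v₁ r h1 p x → LV G v₁ r h1 x ≤ d →
        Child G v₂ r h2 (f p) (f x)) := by
    intro d
    induction d with
    | zero =>
      refine ⟨fun _ => v₂, rfl, ?_, ?_, ?_, ?_⟩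
      · intro x hx hl
        have hx1 : x = v₁ := LV_eq_zero G v₁ r h1 hx (Nat.le_zero.mp hl)
        subst hx1
        exact ⟨mem_gball_self G v₂ r, by rw [LV_root, LV_root], hR⟩
      · intro x y hx hy hlx hly _
        rw [LV_eq_zero G v₁ r h1 hx (Nat.le_zero.mp hlx),
          LV_eq_zero G v₁ r h1 hy (Nat.le_zero.mp hly)]
      · intro y hy hl
        exact ⟨v₁, mem_gball_self G v₁ r, by rw [LV_root],
          (LV_eq_zero G v₂ r h2 hy (Nat.le_zero.mp hl)).symm⟩
      · intro p x hc hl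
        have := Child.lvl G v₁ r h1 hc
        omega
    | succ d ih =>
      obtain ⟨f, hfv, hA, hB, hC, hD⟩ := ih
      by_cases hdr : d < r
      case neg =>
        have hrd : r ≤ d := Nat.le_of_not_lt hdr
        refine ⟨f, hfv, ?_, ?_, ?_, ?_⟩
        · intro x hx _
          exact hA x hx ((LV_le G v₁ r h1 hx).trans hrd)
        · intro x y hx hy _ _ heq
          exact hB x y hx hy ((LV_le G v₁ r h1 hx).trans hrd)
            ((LV_le G v₁ r h1 hy).trans hrd) heq
        · intro y hy _
          obtain ⟨x, hx1, hx2, hx3⟩ := hC y hy ((LV_le G v₂ r h2 hy).trans hrd)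
          exact ⟨x, hx1, hx2.trans (Nat.le_succ d), hx3⟩
        · intro p x hc _
          exact hD p x hc ((LV_le G v₁ r h1 (Child.mem_right G v₁ r h1 hc)).trans hrd)
      case pos =>
      have H : ∀ p : V, ∃ g : V → V,
          p ∈ gball G v₁ r → LV G v₁ r h1 p = d →
            (∀ x, Child G v₁ r h1 p x →
              Child G v₂ r h2 (f p) (g x) ∧ Rrel G x (g x)) ∧
            (∀ x y, Child G v₁ r h1 p x → Child G v₁ r h1 p y → g x = g y → x = y) ∧
            (∀ y, Child G v₂ r h2 (f p) y → ∃ x, Child G v₁ r h1 p x ∧ g x = y) := by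
        intro p
        by_cases hp : p ∈ gball G v₁ r ∧ LV G v₁ r h1 p = d
        case neg => exact ⟨id, fun h1' h2' => absurd ⟨h1', h2'⟩ hp⟩
        case pos =>
        obtain ⟨hps, hpd⟩ := hp
        obtain ⟨hfs, hfl, hfR⟩ := hA p hps (le_of_eq hpd)
        have hfld : LV G v₂ r h2 (f p) = d := hfl.trans hpd
        have claim : ∃ e : (G.neighborSet p) ≃ (G.neighborSet (f p)),
            (∀ x : G.neighborSet p, Rrel G (x : V) ((e x : V))) ∧
            (∀ x : G.neighborSet p, Child G v₁ r h1 (x : V) p →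
              Child G v₂ r h2 ((e x : V)) (f p)) ∧
            (∀ x : G.neighborSet p, Child G v₂ r h2 ((e x : V)) (f p) →
              Child G v₁ r h1 (x : V) p) := by
          rcases Nat.eq_zero_or_pos d with hd0 | hdpos
          · have hp1 : p = v₁ := LV_eq_zero G v₁ r h1 hps (hpd.trans hd0)
            have hp2 : f p = v₂ := LV_eq_zero G v₂ r h2 hfs (hfld.trans hd0)
            obtain ⟨e, he⟩ := exists_equiv G hfR
            refine ⟨e, he, ?_, ?_⟩
            · intro x hc
              have := Child.lvl G v₁ r h1 hc
              omega
            · intro x hc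
              have := Child.lvl G v₂ r h2 hc
              omega
          · have hpne : p ≠ v₁ := by
              intro he
              rw [he, LV_root] at hpd
              omega
            have hcpp : Child G v₁ r h1 (par G v₁ r h1 p) p := par_spec G v₁ r h1 hps hpne
            have hppm : par G v₁ r h1 p ∈ gball G v₁ r := Child.mem_left G v₁ r h1 hcpp
            have hppl : LV G v₁ r h1 (par G v₁ r h1 p) + 1 = d := by
              have := Child.lvl G v₁ r h1 hcpp
              omega
            have hppR : Rrel G (par G v₁ r h1 p) (f (par G v₁ r h1 p)) :=
              (hA _ hppm (by omega)).2.2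
            have hcfp : Child G v₂ r h2 (f (par G v₁ r h1 p)) (f p) :=
              hD _ p hcpp (le_of_eq hpd)
            have hadj1 : G.Adj p (par G v₁ r h1 p) := (Child.adj G v₁ r h1 hcpp).symm
            have hadj2 : G.Adj (f p) (f (par G v₁ r h1 p)) :=
              (Child.adj G v₂ r h2 hcfp).symm
            obtain ⟨e, hpin, he⟩ := exists_equiv_pin G hfR hadj1 hadj2 hppR
            refine ⟨e, he, ?_, ?_⟩
            · intro x hc
              have hx : (x : V) = par G v₁ r h1 p := Child.unique G v₁ r h1 hc hcpp
              have hx' : x = ⟨par G v₁ r h1 p, hadj1⟩ := Subtype.ext hx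
              rw [hx', hpin]
              exact hcfp
            · intro x hc
              have hx : ((e x : V)) = f (par G v₁ r h1 p) :=
                Child.unique G v₂ r h2 hc hcfp
              have hx2 : e x = e ⟨par G v₁ r h1 p, hadj1⟩ :=
                Subtype.coe_injective (hx.trans hpin.symm)
              have hx3 : x = ⟨par G v₁ r h1 p, hadj1⟩ := e.injective hx2
              rw [hx3]
              exact hcpp
        obtain ⟨e, he1, he2, he3⟩ := claim
        refine ⟨fun x => if h : G.Adj p x then ((e ⟨x, h⟩ : V)) else x, fun _ _ => ⟨?_, ?_, ?_⟩⟩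
        · intro x hcx
          have hadj : G.Adj p x := Child.adj G v₁ r h1 hcx
          simp only [dif_pos hadj]
          refine ⟨?_, he1 ⟨x, hadj⟩⟩
          have hay : G.Adj (f p) ((e ⟨x, hadj⟩ : V)) := (e ⟨x, hadj⟩).2
          obtain ⟨hym, hcy⟩ := nbhd_classify G v₂ r h2 hfs (by omega) hay
          rcases hcy with hcy | hcy
          · exact hcy
          · exfalso
            have hc1 : Child G v₁ r h1 x p := he3 ⟨x, hadj⟩ hcy
            have l1 := Child.lvl G v₁ r h1 hcx
            have l2 := Child.lvl G v₁ r h1 hc1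
            omega
        · intro x y hcx hcy heq
          have hax : G.Adj p x := Child.adj G v₁ r h1 hcx
          have hay : G.Adj p y := Child.adj G v₁ r h1 hcy
          simp only [dif_pos hax, dif_pos hay] at heq
          have := e.injective (Subtype.coe_injective heq)
          exact congrArg Subtype.val this
        · intro y hcy
          have hay : G.Adj (f p) y := Child.adj G v₂ r h2 hcy
          set x' := e.symm ⟨y, hay⟩ with hx'
          have hax' : G.Adj p (x' : V) := x'.2
          obtain ⟨hxm, hcx⟩ := nbhd_classify G v₁ r h1 hps (by omega) hax'
          rcases hcx with hcx | hcx
          · refine ⟨(x' : V), hcx, ?_⟩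
            simp only [dif_pos hax']
            have hsub : (⟨(x' : V), hax'⟩ : G.neighborSet p) = x' := Subtype.ext rfl
            rw [hsub, hx', Equiv.apply_symm_apply]
          · exfalso
            have hc2 := he2 x' hcx
            rw [hx', Equiv.apply_symm_apply] at hc2
            have hc2' : Child G v₂ r h2 y (f p) := hc2
            have l1 := Child.lvl G v₂ r h2 hcy
            have l2 := Child.lvl G v₂ r h2 hc2'
            omega
      choose g hg using H
      have key : ∀ x, x ∈ gball G v₁ r → LV G v₁ r h1 x = d + 1 →
          par G v₁ r h1 x ∈ gball G v₁ r ∧ LV G v₁ r h1 (par G v₁ r h1 x) = d ∧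
            Child G v₁ r h1 (par G v₁ r h1 x) x := by
        intro x hx hl
        have hne : x ≠ v₁ := by
          intro he
          rw [he, LV_root] at hl
          omega
        have hc := par_spec G v₁ r h1 hx hne
        have := Child.lvl G v₁ r h1 hc
        exact ⟨Child.mem_left G v₁ r h1 hc, by omega, hc⟩
      refine ⟨fun x => if hx : x ∈ gball G v₁ r ∧ LV G v₁ r h1 x = d + 1 then
        g (par G v₁ r h1 x) x else f x, ?_, ?_, ?_, ?_, ?_⟩
      · have : ¬ (v₁ ∈ gball G v₁ r ∧ LV G v₁ r h1 v₁ = d + 1) := by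
          rintro ⟨-, h⟩
          rw [LV_root] at h
          omega
        simp only [dif_neg this]
        exact hfv
      · -- (A)
        intro x hx hl
        by_cases hxl : LV G v₁ r h1 x = d + 1
        · obtain ⟨hpm, hpl, hpc⟩ := key x hx hxl
          obtain ⟨hg1, -, -⟩ := hg (par G v₁ r h1 x) hpm hpl
          obtain ⟨hcy, hry⟩ := hg1 x hpc
          simp only [dif_pos (And.intro hx hxl)]
          refine ⟨Child.mem_right G v₂ r h2 hcy, ?_, hry⟩
          have l1 := Child.lvl G v₂ r h2 hcy
          have l2 := (hA _ hpm (le_of_eq hpl)).2.1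
          omega
        · simp only [dif_neg (fun h : _ ∧ _ => hxl h.2)]
          exact hA x hx (by omega)
      · -- (B)
        intro x y hx hy hlx hly heq
        beta_reduce at heq
        -- first record the level-preservation of the new map
        have hA' : ∀ z, z ∈ gball G v₁ r → LV G v₁ r h1 z ≤ d + 1 →
            LV G v₂ r h2 ((fun x => if hx : x ∈ gball G v₁ r ∧ LV G v₁ r h1 x = d + 1 then
              g (par G v₁ r h1 x) x else f x) z) = LV G v₁ r h1 z := by
          intro z hz hlz
          by_cases hzl : LV G v₁ r h1 z = d + 1
          · obtain ⟨hpm, hpl, hpc⟩ := key z hz hzl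
            obtain ⟨hg1, -, -⟩ := hg (par G v₁ r h1 z) hpm hpl
            obtain ⟨hcy, -⟩ := hg1 z hpc
            simp only [dif_pos (And.intro hz hzl)]
            have l1 := Child.lvl G v₂ r h2 hcy
            have l2 := (hA _ hpm (le_of_eq hpl)).2.1
            omega
          · simp only [dif_neg (fun h : _ ∧ _ => hzl h.2)]
            exact (hA z hz (by omega)).2.1
        by_cases hxl : LV G v₁ r h1 x = d + 1 <;> by_cases hyl : LV G v₁ r h1 y = d + 1
        · -- both at the top level
          obtain ⟨hpmx, hplx, hpcx⟩ := key x hx hxl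
          obtain ⟨hpmy, hply, hpcy⟩ := key y hy hyl
          simp only [dif_pos (And.intro hx hxl), dif_pos (And.intro hy hyl)] at heq
          obtain ⟨hg1x, hg2x, -⟩ := hg (par G v₁ r h1 x) hpmx hplx
          obtain ⟨hg1y, -, -⟩ := hg (par G v₁ r h1 y) hpmy hply
          have hcx := (hg1x x hpcx).1
          have hcy := (hg1y y hpcy).1
          rw [heq] at hcx
          have hfeq : f (par G v₁ r h1 x) = f (par G v₁ r h1 y) :=
            Child.unique G v₂ r h2 hcx hcy
          have hpeq : par G v₁ r h1 x = par G v₁ r h1 y :=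
            hB _ _ hpmx hpmy (le_of_eq hplx) (le_of_eq hply) hfeq
          rw [hpeq] at heq
          obtain ⟨-, hg2y, -⟩ := hg (par G v₁ r h1 y) hpmy hply
          refine hg2y x y ?_ hpcy heq
          rw [← hpeq]
          exact hpcx
        · exfalso
          have e1 := hA' x hx hlx
          have e2 := hA' y hy hly
          simp only at e1 e2
          rw [heq] at e1
          omega
        · exfalso
          have e1 := hA' x hx hlx
          have e2 := hA' y hy hly
          simp only at e1 e2
          rw [heq] at e1
          omega
        · simp only [dif_neg (fun h : _ ∧ _ => hxl h.2),
            dif_neg (fun h : _ ∧ _ => hyl h.2)] at heq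
          exact hB x y hx hy (by omega) (by omega) heq
      · -- (C)
        intro y hy hl
        by_cases hyl : LV G v₂ r h2 y = d + 1
        · have hne : y ≠ v₂ := by
            intro he
            rw [he, LV_root] at hyl
            omega
          have hcq := par_spec G v₂ r h2 hy hne
          have hqm : par G v₂ r h2 y ∈ gball G v₂ r := Child.mem_left G v₂ r h2 hcq
          have hql : LV G v₂ r h2 (par G v₂ r h2 y) = d := by
            have := Child.lvl G v₂ r h2 hcq
            omega
          obtain ⟨p, hpm, hpl, hpf⟩ := hC _ hqm (le_of_eq hql)
          have hpld : LV G v₁ r h1 p = d := by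
            have := (hA p hpm hpl).2.1
            rw [hpf, hql] at this
            omega
          obtain ⟨-, -, hg3⟩ := hg p hpm hpld
          obtain ⟨x, hcx, hgx⟩ := hg3 y (by rw [hpf]; exact hcq)
          have hxm : x ∈ gball G v₁ r := Child.mem_right G v₁ r h1 hcx
          have hxl : LV G v₁ r h1 x = d + 1 := by
            have := Child.lvl G v₁ r h1 hcx
            omega
          refine ⟨x, hxm, le_of_eq hxl, ?_⟩
          simp only [dif_pos (And.intro hxm hxl)]
          rw [← eq_par G v₁ r h1 hcx]
          exact hgx
        · obtain ⟨x, hxm, hxl, hxf⟩ := hC y hy (by omega)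
          refine ⟨x, hxm, by omega, ?_⟩
          simp only [dif_neg (fun h : _ ∧ _ => by rw [h.2] at hxl; omega : ¬ (x ∈ gball G v₁ r ∧ LV G v₁ r h1 x = d + 1))]
          exact hxf
      · -- (D)
        intro p x hc hl
        have hlc := Child.lvl G v₁ r h1 hc
        by_cases hxl : LV G v₁ r h1 x = d + 1
        · have hppar : p = par G v₁ r h1 x := eq_par G v₁ r h1 hc
          have hxm : x ∈ gball G v₁ r := Child.mem_right G v₁ r h1 hc
          have hpm : p ∈ gball G v₁ r := Child.mem_left G v₁ r h1 hc
          have hpl : LV G v₁ r h1 p = d := by omega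
          obtain ⟨hg1, -, -⟩ := hg p hpm hpl
          have hres := (hg1 x hc).1
          have hnp : ¬ (p ∈ gball G v₁ r ∧ LV G v₁ r h1 p = d + 1) := by
            rintro ⟨-, h⟩
            omega
          simp only [dif_pos (And.intro hxm hxl), dif_neg hnp, ← hppar]
          exact hres
        · have hxm : x ∈ gball G v₁ r := Child.mem_right G v₁ r h1 hc
          have hnp : ¬ (p ∈ gball G v₁ r ∧ LV G v₁ r h1 p = d + 1) := by
            rintro ⟨-, h⟩
            omega
          have hnx : ¬ (x ∈ gball G v₁ r ∧ LV G v₁ r h1 x = d + 1) := by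
            rintro ⟨-, h⟩
            omega
          simp only [dif_neg hnp, dif_neg hnx]
          exact hD p x hc (by omega)
  obtain ⟨f, hfv, hA, hB, hC, hD⟩ := main r
  have hmem : ∀ x : ↥(gball G v₁ r), f (x : V) ∈ gball G v₂ r :=
    fun x => (hA (x : V) x.2 (LV_le G v₁ r h1 x.2)).1
  set F : ↥(gball G v₁ r) → ↥(gball G v₂ r) := fun x => ⟨f (x : V), hmem x⟩ with hF
  have hbij : Function.Bijective F := by
    constructor
    · intro a b h
      exact Subtype.ext (hB (a : V) (b : V) a.2 b.2 (LV_le G v₁ r h1 a.2)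
        (LV_le G v₁ r h1 b.2) (congrArg Subtype.val h))
    · intro y
      obtain ⟨x, hx1, -, hx3⟩ := hC (y : V) y.2 (LV_le G v₂ r h2 y.2)
      exact ⟨⟨x, hx1⟩, Subtype.ext hx3⟩
  have main_dir : ∀ a b : ↥(gball G v₁ r), Child G v₂ r h2 (f (a : V)) (f (b : V)) →
      (G.induce (gball G v₁ r)).Adj a b := by
    intro a b hc
    have hbne : (b : V) ≠ v₁ := by
      intro he
      rw [he, hfv] at hc
      exact Child.not_root G v₂ r h2 hc
    have hq := par_spec G v₁ r h1 b.2 hbne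
    have hq2 := hD _ _ hq (LV_le G v₁ r h1 b.2)
    have hfeq : f (par G v₁ r h1 (b : V)) = f (a : V) := Child.unique G v₂ r h2 hq2 hc
    have hqeq : par G v₁ r h1 (b : V) = (a : V) :=
      hB _ _ (Child.mem_left G v₁ r h1 hq) a.2
        (LV_le G v₁ r h1 (Child.mem_left G v₁ r h1 hq)) (LV_le G v₁ r h1 a.2) hfeq
    rw [hqeq] at hq
    have := Child.adj G v₁ r h1 hq
    simpa using this
  refine ⟨⟨Equiv.ofBijective F hbij, ?_⟩, ?_⟩
  · intro a b
    show (G.induce (gball G v₂ r)).Adj (F a) (F b) ↔ (G.induce (gball G v₁ r)).Adj a b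
    constructor
    · intro hadj
      have hadj' : (G.induce (gball G v₂ r)).Adj ⟨f (a : V), hmem a⟩ ⟨f (b : V), hmem b⟩ := hadj
      rcases adj_classify G v₂ r h2 (hmem a) (hmem b) hadj' with hc | hc
      · exact main_dir a b hc
      · exact (main_dir b a hc).symm
    · intro hadj
      have hadj' : (G.induce (gball G v₁ r)).Adj ⟨(a : V), a.2⟩ ⟨(b : V), b.2⟩ := hadj
      rcases adj_classify G v₁ r h1 a.2 b.2 hadj' with hc | hc
      · have := Child.adj G v₂ r h2 (hD _ _ hc (LV_le G v₁ r h1 (Child.mem_right G v₁ r h1 hc)))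
        simpa [hF] using this
      · have := Child.adj G v₂ r h2 (hD _ _ hc (LV_le G v₁ r h1 (Child.mem_right G v₁ r h1 hc)))
        exact ((by simpa [hF] using this : (G.induce (gball G v₂ r)).Adj (F b) (F a))).symm
  · exact Subtype.ext hfv

end CRAux

/-- If the balls of radius `r` around `v₁` and `v₂` induce trees that are non-isomorphic as
rooted trees, then colour refinement assigns `v₁` and `v₂` different stable colours. -/
theorem distinct_local_trees_distinguished {V : Type} [Fintype V] (G : SimpleGraph V)
    (v₁ v₂ : V) (r : ℕ)
    (h1 : (G.induce (gball G v₁ r)).IsTree) (h2 : (G.induce (gball G v₂ r)).IsTree)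
    (hni : ¬ ∃ φ : (G.induce (gball G v₁ r)) ≃g (G.induce (gball G v₂ r)),
        φ ⟨v₁, mem_gball_self G v₁ r⟩ = ⟨v₂, mem_gball_self G v₂ r⟩) :
    ¬ ∀ i : ℕ, crStep G G i v₁ v₂ := by
  intro hall
  obtain ⟨φ, hφ⟩ := CRAux.rooted_iso G v₁ v₂ r h1 h2 hall
  exact hni ⟨φ, hφ⟩
end
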